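/- arXiv:math/0610040 — 4 statements merged into one kernel-verified Lean document; each statement's English description precedes it below -/
import Mathlib

section
/- Under condition (H2), for any q ≠ q' in ℝ^d and any A > 0 there exists κ > 0 such that lim_{δ→0} limsup_{n→∞} sup_{z ∈ E : |z − nq| < δn} (1/n) log ∫_0^{κn} ℙ_z(Z(t) ∈ nB(q',δ)) dt ≤ −A, where B(q',δ) denotes the open ball of radius δ centered at q'. -/
open MeasureTheory Filter Set Metric
open scoped ENNReal Topology Pointwise

noncomputable section

namespace GreenLDP

/-- The state space `ℝ^d` with its Euclidean norm. -/
abbrev Sp (d : ℕ) := EuclideanSpace ℝ (Fin d)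

/-- Path space: trajectories indexed by (real) time. -/
abbrev Path (d : ℕ) := ℝ → Sp d

variable {d : ℕ}

/-- A path is right continuous with left limits at all nonnegative times. -/
def CadlagOn (φ : Path d) : Prop :=
  ∀ t : ℝ, 0 ≤ t → ContinuousWithinAt φ (Ici t) t ∧
    (0 < t → ∃ L : Sp d, Tendsto φ (𝓝[<] t) (𝓝 L))

/-- Basic setup: a time-homogeneous Markov process `Z` on an unbounded subset
`E ⊆ ℝ^d`, described through the family of its path-space laws `P z`
(the law of the process started at `z ∈ E`), whose sample paths are right
continuous with left limits. -/
structure MarkovSetup (d : ℕ) where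
  /-- the (unbounded) state space `E ⊆ ℝ^d` -/
  E : Set (Sp d)
  /-- `P z` is the law on path space of the process started at `z`;
  `P z S = ℙ_z(Z(·) ∈ S)` -/
  P : Sp d → Measure (Path d)
  prob : ∀ z, IsProbabilityMeasure (P z)
  unbounded : ¬ Bornology.IsBounded E
  start : ∀ z ∈ E, P z {ω | ω 0 = z} = 1
  stays : ∀ z ∈ E, ∀ᵐ ω ∂ P z, ∀ t : ℝ, 0 ≤ t → ω t ∈ E
  cadlag : ∀ z ∈ E, ∀ᵐ ω ∂ P z, CadlagOn ω
  /-- (time-homogeneous) Markov property: conditionally on the position at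
  time `s`, the law of the shifted path is that of the process restarted there. -/
  markov : ∀ z ∈ E, ∀ s : ℝ, 0 ≤ s → ∀ F : Path d → ℝ≥0∞, Measurable F →
    ∫⁻ ω, F (fun t => ω (s + t)) ∂ P z = ∫⁻ ω, ∫⁻ ω', F ω' ∂ P (ω s) ∂ P z

/-- Green's function `G(z,B) = ∫₀^∞ ℙ_z(Z(t) ∈ B) dt`. -/
def green (P : Sp d → Measure (Path d)) (z : Sp d) (B : Set (Sp d)) : ℝ≥0∞ :=
  ∫⁻ t in Ioi (0 : ℝ), P z {ω | ω t ∈ B}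

/-- First exit time `τ_R = inf {t ≥ 0 : |Z(t)| ≥ R}` from the open ball of
radius `R` (equal to `∞` if the process never exits). -/
def exitTime (ω : Path d) (R : ℝ) : ℝ≥0∞ :=
  ⨅ t ∈ {t : ℝ | 0 ≤ t ∧ R ≤ ‖ω t‖}, ENNReal.ofReal t

/-- Truncated Green's function `G_R(z,B) = ∫₀^∞ ℙ_z(Z(t) ∈ B, τ_R > t) dt`. -/
def greenTrunc (P : Sp d → Measure (Path d)) (R : ℝ) (z : Sp d) (B : Set (Sp d)) : ℝ≥0∞ :=
  ∫⁻ t in Ioi (0 : ℝ), P z {ω | ω t ∈ B ∧ ENNReal.ofReal t < exitTime ω R}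

/-- The scaled path `Z^ε(t) = ε Z(t/ε)`. -/
def scaledPath (ε : ℝ) (ω : Path d) : Path d := fun t => ε • ω (t / ε)

/-- The set `{z ∈ E : |εz − q| < δ}` of admissible starting points. -/
def nearScaled (E : Set (Sp d)) (ε : ℝ) (q : Sp d) (δ : ℝ) : Set (Sp d) :=
  {z ∈ E | ‖ε • z - q‖ < δ}

/-- The set `{z ∈ E : |z − nq| < δn}` of admissible starting points. -/
def nearE (E : Set (Sp d)) (q : Sp d) (n δ : ℝ) : Set (Sp d) :=
  {z ∈ E | ‖z - n • q‖ < δ * n}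

/-- Large deviation lower bound for the scaled variables `Z^ε(T) = εZ(T/ε)` over
open sets:  `lim_{δ→0} liminf_{ε→0} ε log inf_{z∈E,|εz−q|<δ} ℙ_z(Z^ε(T) ∈ O)
≥ −inf_{q'∈O} I(q,q')`.  (Since the inner quantity is monotone in `δ`, the limit
as `δ → 0⁺` is the supremum over `δ > 0`.) -/
def LDPLower (E : Set (Sp d)) (P : Sp d → Measure (Path d)) (T : ℝ)
    (I : Sp d → Sp d → EReal) : Prop :=
  ∀ (q : Sp d) (O : Set (Sp d)), IsOpen O →
    -(⨅ q' ∈ O, I q q') ≤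
      ⨆ δ : {δ : ℝ // 0 < δ},
        liminf (fun ε : ℝ =>
          (ε : EReal) * ENNReal.log
            (⨅ z ∈ nearScaled E ε q δ.1, P z {ω | scaledPath ε ω T ∈ O}))
          (𝓝[>] (0 : ℝ))

/-- Large deviation upper bound for the scaled variables `Z^ε(T) = εZ(T/ε)` over
compact sets:  `lim_{δ→0} limsup_{ε→0} ε log sup_{z∈E,|εz−q|<δ} ℙ_z(Z^ε(T) ∈ V)
≤ −inf_{q'∈V} I(q,q')`. -/
def LDPUpperCompact (E : Set (Sp d)) (P : Sp d → Measure (Path d)) (T : ℝ)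
    (I : Sp d → Sp d → EReal) : Prop :=
  ∀ (q : Sp d) (V : Set (Sp d)), IsCompact V →
    (⨅ δ : {δ : ℝ // 0 < δ},
      limsup (fun ε : ℝ =>
        (ε : EReal) * ENNReal.log
          (⨆ z ∈ nearScaled E ε q δ.1, P z {ω | scaledPath ε ω T ∈ V}))
        (𝓝[>] (0 : ℝ)))
      ≤ -(⨅ q' ∈ V, I q q')

/-- Large deviation upper bound over closed sets (for the full LDP). -/
def LDPUpperClosed (E : Set (Sp d)) (P : Sp d → Measure (Path d)) (T : ℝ)
    (I : Sp d → Sp d → EReal) : Prop :=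
  ∀ (q : Sp d) (V : Set (Sp d)), IsClosed V →
    (⨅ δ : {δ : ℝ // 0 < δ},
      limsup (fun ε : ℝ =>
        (ε : EReal) * ENNReal.log
          (⨆ z ∈ nearScaled E ε q δ.1, P z {ω | scaledPath ε ω T ∈ V}))
        (𝓝[>] (0 : ℝ)))
      ≤ -(⨅ q' ∈ V, I q q')

/-- The weak large deviation principle in `ℝ^d` for `Z^ε(T)` with a lower
semicontinuous rate function `I_T : ℝ^d × ℝ^d → [0,∞)`. -/
def WeakLDP (E : Set (Sp d)) (P : Sp d → Measure (Path d)) (T : ℝ)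
    (I : Sp d → Sp d → ℝ) : Prop :=
  LowerSemicontinuous (fun p : Sp d × Sp d => I p.1 p.2) ∧
  (∀ q q' : Sp d, 0 ≤ I q q') ∧
  LDPLower E P T (fun q q' => ((I q q' : ℝ) : EReal)) ∧
  LDPUpperCompact E P T (fun q q' => ((I q q' : ℝ) : EReal))

/-- Hypothesis (H1): for every `T > 0` the scaled variables `Z^ε(T)` satisfy the
weak large deviation principle with rate function `I_T`. -/
def H1 (E : Set (Sp d)) (P : Sp d → Measure (Path d))
    (I : ℝ → Sp d → Sp d → ℝ) : Prop :=
  ∀ T : ℝ, 0 < T → WeakLDP E P T (I T)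

/-- The jump generating function
`φ̂(a) = sup_{z∈E} sup_{t∈[0,1]} 𝔼_z exp(a·(Z(t)−z))` of hypothesis (H2). -/
def mgf (E : Set (Sp d)) (P : Sp d → Measure (Path d)) (a : Sp d) : ℝ≥0∞ :=
  ⨆ z ∈ E, ⨆ t ∈ Icc (0:ℝ) 1,
    ∫⁻ ω, ENNReal.ofReal (Real.exp ((inner ℝ a (ω t - z) : ℝ))) ∂ P z

/-- Hypothesis (H2): `φ̂(a) < ∞` for every `a ∈ ℝ^d`. -/
def H2 (E : Set (Sp d)) (P : Sp d → Measure (Path d)) : Prop :=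
  ∀ a : Sp d, mgf E P a < ⊤

/-- Hypothesis (H3), communication condition with constant `θ > 0` : there is a
positive function `σ` on `E` with `σ(z)/|z| → 0` as `|z| → ∞` such that for all
`z, z' ∈ E` the probability, starting from `z`, of ever hitting the open ball
`B(z', σ(z'))` is at least `exp(−θ|z'−z|)`. -/
def H3 (E : Set (Sp d)) (P : Sp d → Measure (Path d)) (θ : ℝ) : Prop :=
  0 < θ ∧ ∃ σ : Sp d → ℝ, (∀ z ∈ E, 0 < σ z) ∧
    (∀ η : ℝ, 0 < η → ∃ M : ℝ, ∀ z ∈ E, M ≤ ‖z‖ → σ z < η * ‖z‖) ∧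
    ∀ z ∈ E, ∀ z' ∈ E,
      ENNReal.ofReal (Real.exp (-θ * ‖z' - z‖)) ≤
        P z {ω | ∃ t : ℝ, 0 ≤ t ∧ ω t ∈ ball z' (σ z')}

/-- The set `𝓡` of all possible limits `lim_{ε→0} ε z_ε` with `z_ε ∈ E`. -/
def RSet (E : Set (Sp d)) : Set (Sp d) :=
  {q | ∃ zf : ℝ → Sp d, (∀ ε : ℝ, zf ε ∈ E) ∧
    Tendsto (fun ε : ℝ => ε • zf ε) (𝓝[>] (0:ℝ)) (𝓝 q)}

/-- The quasipotential `I(q,q') = inf_{T>0} I_T(q,q')`. -/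
def quasipot (I : ℝ → Sp d → Sp d → ℝ) (q q' : Sp d) : ℝ :=
  ⨅ T : {T : ℝ // 0 < T}, I T.1 q q'

-- `Î(q,q') = I(q,q')` for `q ≠ q'` and `Î(q,q) = 0`.
open Classical in
def quasipotHat (I : ℝ → Sp d → Sp d → ℝ) (q q' : Sp d) : ℝ :=
  if q = q' then 0 else quasipot I q q'

/-- The Skorohod distance on `D([0,T],ℝ^d)` :
`d(φ,ψ) = inf_λ max(sup_{t∈[0,T]}|λ(t)−t|, sup_{t∈[0,T]}|φ(λ(t))−ψ(t)|)`,
the infimum being over increasing bijections `λ` of `[0,T]`. -/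
def skorohodDist (T : ℝ) (φ ψ : Path d) : ℝ :=
  sInf {r : ℝ | 0 ≤ r ∧ ∃ lam : ℝ → ℝ, StrictMonoOn lam (Icc 0 T) ∧
    lam '' Icc 0 T = Icc 0 T ∧
    ∀ t ∈ Icc 0 T, |lam t - t| ≤ r ∧ ‖φ (lam t) - ψ t‖ ≤ r}

/-- The Skorohod topology on paths over the time interval `[0,T]`, generated by
the balls of the Skorohod distance. -/
def skorohodTop (d : ℕ) (T : ℝ) : TopologicalSpace (Path d) :=
  TopologicalSpace.generateFrom
    {s | ∃ (φ : Path d) (r : ℝ), 0 < r ∧ s = {ψ | skorohodDist T φ ψ < r}}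

/-- A good rate function on `D([0,T],ℝ^d)` : for every `c ≥ 0` and every compact
`V ⊆ ℝ^d` the set `{φ : φ(0) ∈ V, I_{[0,T]}(φ) ≤ c}` is compact for the
Skorohod topology. -/
def GoodRate (T : ℝ) (J : Path d → ℝ≥0∞) : Prop :=
  ∀ c : ℝ, 0 ≤ c → ∀ V : Set (Sp d), IsCompact V →
    @IsCompact _ (skorohodTop d T) {φ : Path d | φ 0 ∈ V ∧ J φ ≤ ENNReal.ofReal c}

/-- Sample path large deviation lower bound on `D([0,T],ℝ^d)`. -/
def SPLDLower (E : Set (Sp d)) (P : Sp d → Measure (Path d)) (T : ℝ)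
    (J : Path d → ℝ≥0∞) : Prop :=
  ∀ (z : Sp d) (𝓞 : Set (Path d)), @IsOpen _ (skorohodTop d T) 𝓞 →
    -(⨅ φ ∈ {φ ∈ 𝓞 | φ 0 = z}, (J φ : EReal)) ≤
      ⨆ δ : {δ : ℝ // 0 < δ},
        liminf (fun ε : ℝ =>
          (ε : EReal) * ENNReal.log
            (⨅ z' ∈ nearScaled E ε z δ.1, P z' {ω | scaledPath ε ω ∈ 𝓞}))
          (𝓝[>] (0 : ℝ))

/-- Sample path large deviation upper bound on `D([0,T],ℝ^d)`. -/
def SPLDUpper (E : Set (Sp d)) (P : Sp d → Measure (Path d)) (T : ℝ)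
    (J : Path d → ℝ≥0∞) : Prop :=
  ∀ (z : Sp d) (F : Set (Path d)), @IsClosed _ (skorohodTop d T) F →
    (⨅ δ : {δ : ℝ // 0 < δ},
      limsup (fun ε : ℝ =>
        (ε : EReal) * ENNReal.log
          (⨆ z' ∈ nearScaled E ε z δ.1, P z' {ω | scaledPath ε ω ∈ F}))
        (𝓝[>] (0 : ℝ)))
      ≤ -(⨅ φ ∈ {φ ∈ F | φ 0 = z}, (J φ : EReal))

/-- The sample path large deviation principle on `D([0,T],ℝ^d)` with a good rate
function `J = I_{[0,T]}`. -/
def SPLD (E : Set (Sp d)) (P : Sp d → Measure (Path d)) (T : ℝ)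
    (J : Path d → ℝ≥0∞) : Prop :=
  GoodRate T J ∧ SPLDLower E P T J ∧ SPLDUpper E P T J

/-- Hypothesis (H1'): for every `T > 0` the scaled processes satisfy the sample
path large deviation principle with good rate function `I_{[0,T]} = Ipath T`,
and `I_T(q,q')` is the infimum of `I_{[0,T]}(φ)` over paths with `φ(0) = q`,
`φ(T) = q'`. -/
def H1' (E : Set (Sp d)) (P : Sp d → Measure (Path d))
    (Ipath : ℝ → Path d → ℝ≥0∞) (I : ℝ → Sp d → Sp d → ℝ) : Prop :=
  ∀ T : ℝ, 0 < T → SPLD E P T (Ipath T) ∧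
    ∀ q q' : Sp d,
      (ENNReal.ofReal (I T q q') : ℝ≥0∞) =
        ⨅ φ ∈ {φ : Path d | φ 0 = q ∧ φ T = q'}, Ipath T φ

/-- `lim_{δ→0} liminf_{n→∞} (1/n) log inf_{z∈E,|z−nq|<δn} G(z, nB)`
(the limit in `δ` being a supremum, by monotonicity). -/
def greenLiminf (E : Set (Sp d)) (P : Sp d → Measure (Path d))
    (q : Sp d) (B : Set (Sp d)) : EReal :=
  ⨆ δ : {δ : ℝ // 0 < δ},
    liminf (fun n : ℕ =>
      ((((n : ℝ)⁻¹ : ℝ)) : EReal) * ENNReal.log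
        (⨅ z ∈ nearE E q n δ.1, green P z ((n : ℝ) • B))) atTop

/-- `lim_{δ→0} limsup_{n→∞} (1/n) log sup_{z∈E,|z−nq|<δn} G(z, nB)`
(the limit in `δ` being an infimum, by monotonicity). -/
def greenLimsup (E : Set (Sp d)) (P : Sp d → Measure (Path d))
    (q : Sp d) (B : Set (Sp d)) : EReal :=
  ⨅ δ : {δ : ℝ // 0 < δ},
    limsup (fun n : ℕ =>
      ((((n : ℝ)⁻¹ : ℝ)) : EReal) * ENNReal.log
        (⨆ z ∈ nearE E q n δ.1, green P z ((n : ℝ) • B))) atTop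


lemma E_nonempty (M : MarkovSetup d) : M.E.Nonempty := by
  rcases Set.eq_empty_or_nonempty M.E with h | h
  · exact absurd (h ▸ Bornology.isBounded_empty) M.unbounded
  · exact h

lemma meas_exp_inner (a z : Sp d) (t : ℝ) :
    Measurable (fun ω : Path d => ENNReal.ofReal (Real.exp ((inner ℝ a (ω t - z) : ℝ)))) := by
  apply ENNReal.measurable_ofReal.comp
  apply Real.continuous_exp.measurable.comp
  exact (continuous_const.inner continuous_id).measurable.comp
    ((measurable_pi_apply t).sub measurable_const)

lemma lintegral_exp_inner_zero (M : MarkovSetup d) {z : Sp d} (hz : z ∈ M.E) (a : Sp d) :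
    ∫⁻ ω, ENNReal.ofReal (Real.exp ((inner ℝ a (ω 0 - z) : ℝ))) ∂ M.P z = 1 := by
  haveI := M.prob z
  have hS : MeasurableSet {ω : Path d | ω 0 = z} := by
    have : {ω : Path d | ω 0 = z} = (fun ω : Path d => ω 0) ⁻¹' {z} := rfl
    rw [this]; exact (measurable_pi_apply 0) (measurableSet_singleton z)
  have hae : ∀ᵐ ω ∂ M.P z, ω 0 = z := by
    rw [ae_iff]
    have : {ω : Path d | ¬ ω 0 = z} = {ω : Path d | ω 0 = z}ᶜ := rfl
    rw [this, measure_compl hS (measure_ne_top _ _), M.start z hz, measure_univ, tsub_self]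
  calc ∫⁻ ω, ENNReal.ofReal (Real.exp ((inner ℝ a (ω 0 - z) : ℝ))) ∂ M.P z
      = ∫⁻ _, 1 ∂ M.P z := by
        refine lintegral_congr_ae (hae.mono fun ω hω => ?_)
        simp [hω]
    _ = 1 := by simp

lemma one_le_mgf (M : MarkovSetup d) (a : Sp d) : 1 ≤ mgf M.E M.P a := by
  obtain ⟨z₀, hz₀⟩ := E_nonempty M
  have h0 : (1 : ℝ≥0∞) = ∫⁻ ω, ENNReal.ofReal (Real.exp ((inner ℝ a (ω 0 - z₀) : ℝ))) ∂ M.P z₀ :=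
    (lintegral_exp_inner_zero M hz₀ a).symm
  rw [h0]
  exact le_iSup₂_of_le z₀ hz₀ (le_iSup₂_of_le 0 ⟨le_rfl, zero_le_one⟩ le_rfl)

lemma moment_bound (M : MarkovSetup d) (a : Sp d) :
    ∀ k : ℕ, ∀ t : ℝ, 0 ≤ t → t ≤ k → ∀ z ∈ M.E,
      ∫⁻ ω, ENNReal.ofReal (Real.exp ((inner ℝ a (ω t - z) : ℝ))) ∂ M.P z
        ≤ (mgf M.E M.P a) ^ k := by
  intro k
  induction k with
  | zero =>
    intro t ht0 ht1 z hz
    have : t = 0 := le_antisymm (by exact_mod_cast ht1) ht0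
    subst this
    rw [lintegral_exp_inner_zero M hz a, pow_zero]
  | succ k ih =>
    intro t ht0 ht1 z hz
    rcases le_or_gt t k with hk | hk
    · exact (ih t ht0 hk z hz).trans (pow_le_pow_right' (one_le_mgf M a) (Nat.le_succ k))
    · -- t ∈ (k, k+1]
      set r : ℝ := t - k with hr
      have hr0 : 0 ≤ r := by simp only [hr]; linarith
      have hr1 : r ≤ 1 := by
        have : (t : ℝ) ≤ (k : ℝ) + 1 := by exact_mod_cast ht1
        simp only [hr]; linarith
      have hkr : (k : ℝ) + r = t := by simp [hr]
      have hFmeas : Measurable (fun ω' : Path d => ENNReal.ofReal (Real.exp ((inner ℝ a (ω' r) : ℝ)))) := by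
        apply ENNReal.measurable_ofReal.comp
        apply Real.continuous_exp.measurable.comp
        exact (continuous_const.inner continuous_id).measurable.comp (measurable_pi_apply r)
      have hmarkov := M.markov z hz k (Nat.cast_nonneg k)
        (fun ω' => ENNReal.ofReal (Real.exp ((inner ℝ a (ω' r) : ℝ)))) hFmeas
      -- define h s = ∫ exp ⟪a, ω s⟫
      have hmeasS : ∀ s : ℝ, Measurable (fun ω : Path d => ENNReal.ofReal (Real.exp ((inner ℝ a (ω s) : ℝ)))) := by
        intro s
        apply ENNReal.measurable_ofReal.comp
        apply Real.continuous_exp.measurable.comp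
        exact (continuous_const.inner continuous_id).measurable.comp (measurable_pi_apply s)
      -- LHS of markov equals h t
      have hLHS : ∫⁻ ω, ENNReal.ofReal (Real.exp ((inner ℝ a ((fun u => ω ((k : ℝ) + u)) r) : ℝ))) ∂ M.P z
          = ∫⁻ ω, ENNReal.ofReal (Real.exp ((inner ℝ a (ω t) : ℝ))) ∂ M.P z := by
        simp only [hkr]
      -- bound the inner integral a.e.
      have hstays := M.stays z hz
      have hinner : ∀ᵐ ω ∂ M.P z,
          (∫⁻ ω', ENNReal.ofReal (Real.exp ((inner ℝ a (ω' r) : ℝ))) ∂ M.P (ω (k : ℝ)))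
            ≤ ENNReal.ofReal (Real.exp ((inner ℝ a (ω (k : ℝ)) : ℝ))) * mgf M.E M.P a := by
        refine hstays.mono fun ω hω => ?_
        have hzE : ω (k : ℝ) ∈ M.E := hω (k : ℝ) (Nat.cast_nonneg k)
        set w := ω (k : ℝ) with hw
        have hsplit : ∀ ω' : Path d,
            ENNReal.ofReal (Real.exp ((inner ℝ a (ω' r) : ℝ)))
              = ENNReal.ofReal (Real.exp ((inner ℝ a w : ℝ)))
                * ENNReal.ofReal (Real.exp ((inner ℝ a (ω' r - w) : ℝ))) := by
          intro ω'
          rw [← ENNReal.ofReal_mul (Real.exp_nonneg _), ← Real.exp_add]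
          congr 1
          rw [inner_sub_right]
          ring
        calc ∫⁻ ω', ENNReal.ofReal (Real.exp ((inner ℝ a (ω' r) : ℝ))) ∂ M.P w
            = ∫⁻ ω', ENNReal.ofReal (Real.exp ((inner ℝ a w : ℝ)))
                * ENNReal.ofReal (Real.exp ((inner ℝ a (ω' r - w) : ℝ))) ∂ M.P w := by
              exact lintegral_congr fun ω' => hsplit ω'
          _ = ENNReal.ofReal (Real.exp ((inner ℝ a w : ℝ)))
                * ∫⁻ ω', ENNReal.ofReal (Real.exp ((inner ℝ a (ω' r - w) : ℝ))) ∂ M.P w :=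
              lintegral_const_mul _ (meas_exp_inner a w r)
          _ ≤ ENNReal.ofReal (Real.exp ((inner ℝ a w : ℝ))) * mgf M.E M.P a := by
              apply mul_le_mul_right
              exact le_iSup₂_of_le w hzE (le_iSup₂_of_le r ⟨hr0, hr1⟩ le_rfl)
      -- conclude
      have hsplit2 : ∀ (s : ℝ) (ω : Path d),
          ENNReal.ofReal (Real.exp ((inner ℝ a (ω s - z) : ℝ)))
            = ENNReal.ofReal (Real.exp (-(inner ℝ a z : ℝ)))
              * ENNReal.ofReal (Real.exp ((inner ℝ a (ω s) : ℝ))) := by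
        intro s ω
        rw [← ENNReal.ofReal_mul (Real.exp_nonneg _), ← Real.exp_add]
        congr 1
        rw [inner_sub_right]
        ring
      have key : ∫⁻ ω, ENNReal.ofReal (Real.exp ((inner ℝ a (ω t) : ℝ))) ∂ M.P z
          ≤ mgf M.E M.P a * ∫⁻ ω, ENNReal.ofReal (Real.exp ((inner ℝ a (ω (k:ℝ)) : ℝ))) ∂ M.P z := by
        calc ∫⁻ ω, ENNReal.ofReal (Real.exp ((inner ℝ a (ω t) : ℝ))) ∂ M.P z
            = ∫⁻ ω, (∫⁻ ω', ENNReal.ofReal (Real.exp ((inner ℝ a (ω' r) : ℝ))) ∂ M.P (ω (k : ℝ))) ∂ M.P z := by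
              rw [← hLHS]; exact hmarkov
          _ ≤ ∫⁻ ω, ENNReal.ofReal (Real.exp ((inner ℝ a (ω (k:ℝ)) : ℝ))) * mgf M.E M.P a ∂ M.P z :=
              lintegral_mono_ae hinner
          _ = (∫⁻ ω, ENNReal.ofReal (Real.exp ((inner ℝ a (ω (k:ℝ)) : ℝ))) ∂ M.P z) * mgf M.E M.P a :=
              lintegral_mul_const _ (hmeasS (k : ℝ))
          _ = mgf M.E M.P a * ∫⁻ ω, ENNReal.ofReal (Real.exp ((inner ℝ a (ω (k:ℝ)) : ℝ))) ∂ M.P z :=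
              mul_comm _ _
      have hIH := ih (k : ℝ) (Nat.cast_nonneg k) le_rfl z hz
      -- relate offset integrals
      have hshift : ∀ s : ℝ,
          ∫⁻ ω, ENNReal.ofReal (Real.exp ((inner ℝ a (ω s - z) : ℝ))) ∂ M.P z
            = ENNReal.ofReal (Real.exp (-(inner ℝ a z : ℝ)))
              * ∫⁻ ω, ENNReal.ofReal (Real.exp ((inner ℝ a (ω s) : ℝ))) ∂ M.P z := by
        intro s
        rw [← lintegral_const_mul _ (hmeasS s)]
        exact lintegral_congr fun ω => hsplit2 s ω
      have hexpinv : ENNReal.ofReal (Real.exp (-(inner ℝ a z : ℝ)))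
          * ENNReal.ofReal (Real.exp ((inner ℝ a z : ℝ))) = 1 := by
        rw [← ENNReal.ofReal_mul (Real.exp_nonneg _), ← Real.exp_add, neg_add_cancel,
          Real.exp_zero, ENNReal.ofReal_one]
      have hinv : ∫⁻ ω, ENNReal.ofReal (Real.exp ((inner ℝ a (ω (k:ℝ)) : ℝ))) ∂ M.P z
          = ENNReal.ofReal (Real.exp ((inner ℝ a z : ℝ)))
            * ∫⁻ ω, ENNReal.ofReal (Real.exp ((inner ℝ a (ω (k:ℝ) - z) : ℝ))) ∂ M.P z := by
        rw [hshift (k : ℝ), ← mul_assoc, mul_comm (ENNReal.ofReal (Real.exp ((inner ℝ a z : ℝ)))),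
          hexpinv, one_mul]
      calc ∫⁻ ω, ENNReal.ofReal (Real.exp ((inner ℝ a (ω t - z) : ℝ))) ∂ M.P z
          = ENNReal.ofReal (Real.exp (-(inner ℝ a z : ℝ)))
            * ∫⁻ ω, ENNReal.ofReal (Real.exp ((inner ℝ a (ω t) : ℝ))) ∂ M.P z := hshift t
        _ ≤ ENNReal.ofReal (Real.exp (-(inner ℝ a z : ℝ)))
            * (mgf M.E M.P a * ∫⁻ ω, ENNReal.ofReal (Real.exp ((inner ℝ a (ω (k:ℝ)) : ℝ))) ∂ M.P z) :=
            mul_le_mul_right key _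
        _ = mgf M.E M.P a * (ENNReal.ofReal (Real.exp (-(inner ℝ a z : ℝ)))
              * ENNReal.ofReal (Real.exp ((inner ℝ a z : ℝ)))
              * ∫⁻ ω, ENNReal.ofReal (Real.exp ((inner ℝ a (ω (k:ℝ) - z) : ℝ))) ∂ M.P z) := by
            rw [hinv]; ring
        _ = mgf M.E M.P a * ∫⁻ ω, ENNReal.ofReal (Real.exp ((inner ℝ a (ω (k:ℝ) - z) : ℝ))) ∂ M.P z := by
            rw [hexpinv, one_mul]
        _ ≤ mgf M.E M.P a * (mgf M.E M.P a) ^ k := mul_le_mul_right hIH _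
        _ = (mgf M.E M.P a) ^ (k + 1) := (pow_succ' _ _).symm

lemma prob_le_exp (M : MarkovSetup d) (z : Sp d) (t : ℝ) (a : Sp d) (c : ℝ)
    {B : Set (Sp d)} (hBm : MeasurableSet B) (hB : ∀ x ∈ B, c ≤ (inner ℝ a (x - z) : ℝ)) :
    M.P z {ω | ω t ∈ B} ≤ ENNReal.ofReal (Real.exp (-c)) *
      ∫⁻ ω, ENNReal.ofReal (Real.exp ((inner ℝ a (ω t - z) : ℝ))) ∂ M.P z := by
  have hSm : MeasurableSet {ω : Path d | ω t ∈ B} := by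
    have : {ω : Path d | ω t ∈ B} = (fun ω : Path d => ω t) ⁻¹' B := rfl
    rw [this]; exact (measurable_pi_apply t) hBm
  have hfmeas : Measurable (fun ω : Path d =>
      ENNReal.ofReal (Real.exp ((inner ℝ a (ω t - z) : ℝ) - c))) := by
    apply ENNReal.measurable_ofReal.comp
    apply Real.continuous_exp.measurable.comp
    exact (((continuous_const.inner continuous_id).measurable.comp
      ((measurable_pi_apply t).sub measurable_const)).sub measurable_const)
  calc M.P z {ω : Path d | ω t ∈ B}
      = ∫⁻ _ in {ω : Path d | ω t ∈ B}, 1 ∂ M.P z := (setLIntegral_one _).symm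
    _ ≤ ∫⁻ ω in {ω : Path d | ω t ∈ B},
          ENNReal.ofReal (Real.exp ((inner ℝ a (ω t - z) : ℝ) - c)) ∂ M.P z := by
        refine setLIntegral_mono hfmeas fun ω hω => ?_
        rw [← ENNReal.ofReal_one]
        apply ENNReal.ofReal_le_ofReal
        rw [← Real.exp_zero]
        apply Real.exp_le_exp.mpr
        have := hB (ω t) hω
        linarith
    _ ≤ ∫⁻ ω, ENNReal.ofReal (Real.exp ((inner ℝ a (ω t - z) : ℝ) - c)) ∂ M.P z :=
        setLIntegral_le_lintegral _ _
    _ = ∫⁻ ω, ENNReal.ofReal (Real.exp (-c)) *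
          ENNReal.ofReal (Real.exp ((inner ℝ a (ω t - z) : ℝ))) ∂ M.P z := by
        refine lintegral_congr fun ω => ?_
        rw [← ENNReal.ofReal_mul (Real.exp_nonneg _), ← Real.exp_add]
        ring_nf
    _ = ENNReal.ofReal (Real.exp (-c)) *
          ∫⁻ ω, ENNReal.ofReal (Real.exp ((inner ℝ a (ω t - z) : ℝ))) ∂ M.P z :=
        lintegral_const_mul _ (meas_exp_inner a z t)

set_option maxHeartbeats 1000000

/-- Under (H2), for any `q ≠ q'` and any `A > 0` there is `κ > 0`
such that `lim_{δ→0} limsup_{n→∞} sup_{z∈E,|z−nq|<δn} (1/n) log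
∫₀^{κn} ℙ_z(Z(t) ∈ nB(q',δ)) dt ≤ −A`. -/
theorem short_time_negligible
    {d : ℕ} (M : MarkovSetup d) (hH2 : H2 M.E M.P) :
    ∀ q q' : Sp d, q ≠ q' → ∀ A : ℝ, 0 < A → ∃ κ : ℝ, 0 < κ ∧
      (⨅ δ : {δ : ℝ // 0 < δ},
        limsup (fun n : ℕ =>
          ((((n : ℝ)⁻¹ : ℝ)) : EReal) * ENNReal.log
            (⨆ z ∈ nearE M.E q n δ.1,
              ∫⁻ t in Ioc (0 : ℝ) (κ * n),
                M.P z {ω | ω t ∈ (n : ℝ) • ball q' δ.1})) atTop)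
        ≤ -(A : EReal) := by
  intro q q' hqq A hA
  -- basic quantities
  set r : ℝ := ‖q' - q‖ with hr_def
  have hr : 0 < r := by
    rw [hr_def, norm_pos_iff, sub_ne_zero]
    exact fun h => hqq h.symm
  set a : Sp d := ((A + 1) / r ^ 2) • (q' - q) with ha_def
  have hA1 : 0 < A + 1 := by linarith
  have hnorm_a : ‖a‖ = (A + 1) / r := by
    rw [ha_def, norm_smul, Real.norm_eq_abs, abs_of_pos (by positivity), ← hr_def]
    field_simp
  have hinner_a : (inner ℝ a (q' - q) : ℝ) = A + 1 := by
    rw [ha_def, real_inner_smul_left, real_inner_self_eq_norm_sq, ← hr_def]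
    field_simp
  -- the mgf
  set m : ℝ≥0∞ := mgf M.E M.P a with hm_def
  have hm_top : m ≠ ⊤ := (hH2 a).ne
  have hm1 : 1 ≤ m := one_le_mgf M a
  set m' : ℝ := m.toReal with hm'_def
  have hm'1 : 1 ≤ m' := by
    have := ENNReal.toReal_mono hm_top hm1
    simpa using this
  have hm'0 : 0 < m' := lt_of_lt_of_le one_pos hm'1
  have hm_eq : m = ENNReal.ofReal m' := (ENNReal.ofReal_toReal hm_top).symm
  set C : ℝ := Real.log m' with hC_def
  have hC0 : 0 ≤ C := Real.log_nonneg hm'1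
  -- choose κ and δ
  set κ : ℝ := (2 * (C + 1))⁻¹ with hκ_def
  have hκpos : 0 < κ := by positivity
  have hκC : κ * C ≤ 1 / 2 := by
    rw [hκ_def, inv_mul_le_iff₀ (by positivity)]
    nlinarith
  refine ⟨κ, hκpos, ?_⟩
  set δ : ℝ := r / (8 * (A + 1)) with hδ_def
  have hδpos : 0 < δ := by positivity
  set e : ℝ := 2 * (‖a‖ * δ) with he_def
  have he : e ≤ 1 / 4 := by
    have : ‖a‖ * δ = 1 / 8 := by
      rw [hnorm_a, hδ_def]
      field_simp
    rw [he_def, this]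
    norm_num
  have he0 : 0 ≤ e := by
    rw [he_def]
    positivity
  refine le_trans (iInf_le _ ⟨δ, hδpos⟩) ?_
  -- eventual bound
  have hone : ∀ᶠ n : ℕ in atTop, 1 ≤ (n : ℝ) := by
    filter_upwards [eventually_ge_atTop 1] with n hn
    exact_mod_cast hn
  have hlog : ∀ᶠ n : ℕ in atTop, Real.log (κ * n) / n + C / n ≤ 1 / 4 := by
    have t1 : Tendsto (fun x : ℝ => Real.log x / x) atTop (𝓝 0) :=
      Real.isLittleO_log_id_atTop.tendsto_div_nhds_zero
    have t2 : Tendsto (fun n : ℕ => κ * (n : ℝ)) atTop atTop :=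
      (tendsto_natCast_atTop_atTop).const_mul_atTop hκpos
    have t3 : Tendsto (fun n : ℕ => Real.log (κ * n) / (κ * n) * κ) atTop (𝓝 0) := by
      have := (t1.comp t2).mul_const κ
      simpa using this
    have t4 : Tendsto (fun n : ℕ => Real.log (κ * n) / n) atTop (𝓝 0) := by
      apply t3.congr'
      filter_upwards [eventually_ge_atTop 1] with n hn
      have hn' : (1 : ℝ) ≤ (n : ℝ) := by exact_mod_cast hn
      have hn0 : (n : ℝ) ≠ 0 := by linarith
      field_simp
    have t5 : Tendsto (fun n : ℕ => C / (n : ℝ)) atTop (𝓝 0) :=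
      tendsto_const_div_atTop_nhds_zero_nat C
    have t6 := t4.add t5
    rw [add_zero] at t6
    exact t6.eventually (eventually_le_nhds (by norm_num))
  apply Filter.limsup_le_of_le (by isBoundedDefault)
  filter_upwards [hone, hlog] with n hN1 hlogn
  set N : ℝ := (n : ℝ) with hN_def
  have hN0 : 0 < N := lt_of_lt_of_le one_pos hN1
  set k : ℕ := ⌈κ * N⌉₊ with hk_def
  have hkk : κ * N ≤ (k : ℝ) := Nat.le_ceil _
  have hk1 : (k : ℝ) ≤ κ * N + 1 := by
    have := Nat.ceil_lt_add_one (by positivity : (0:ℝ) ≤ κ * N)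
    exact this.le
  set c : ℝ := N * ((A + 1) - e) with hc_def
  -- the ball is measurable and far from starting points
  have hball_eq : (N : ℝ) • ball q' δ = ball (N • q') (N * δ) := by
    rw [_root_.smul_ball (ne_of_gt hN0)]
    rw [Real.norm_eq_abs, abs_of_pos hN0]
  have hBm : MeasurableSet ((N : ℝ) • ball q' δ) := by
    rw [hball_eq]; exact measurableSet_ball
  -- step A : bound the sup
  set Bn : ℝ := Real.exp (-c) * m' ^ k * (κ * N) with hBn_def
  have hBnpos : 0 < Bn := by
    rw [hBn_def]
    positivity
  have hSup : (⨆ z ∈ nearE M.E q n δ,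
      ∫⁻ t in Ioc (0 : ℝ) (κ * n), M.P z {ω | ω t ∈ (n : ℝ) • ball q' δ})
      ≤ ENNReal.ofReal Bn := by
    refine iSup₂_le fun z hz => ?_
    obtain ⟨hzE, hznear⟩ := hz
    -- z is δN-close to Nq
    have hB : ∀ x ∈ (N : ℝ) • ball q' δ, c ≤ (inner ℝ a (x - z) : ℝ) := by
      intro x hx
      rw [hball_eq] at hx
      have hx' : ‖x - N • q'‖ < N * δ := by
        rw [← dist_eq_norm]; exact hx
      have hdecomp : x - z = (x - N • q') + N • (q' - q) + (N • q - z) := by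
        rw [smul_sub]; abel
      rw [hdecomp, inner_add_right, inner_add_right, real_inner_smul_right, hinner_a]
      have h1 : -(‖a‖ * (N * δ)) ≤ (inner ℝ a (x - N • q') : ℝ) := by
        have habs := abs_real_inner_le_norm a (x - N • q')
        have h2 : ‖a‖ * ‖x - N • q'‖ ≤ ‖a‖ * (N * δ) :=
          mul_le_mul_of_nonneg_left hx'.le (norm_nonneg a)
        have := neg_abs_le (inner ℝ a (x - N • q') : ℝ)
        linarith
      have h2 : -(‖a‖ * (δ * N)) ≤ (inner ℝ a (N • q - z) : ℝ) := by
        have habs := abs_real_inner_le_norm a (N • q - z)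
        have hnn : ‖N • q - z‖ = ‖z - N • q‖ := norm_sub_rev _ _
        have h2 : ‖a‖ * ‖N • q - z‖ ≤ ‖a‖ * (δ * N) := by
          rw [hnn]
          exact mul_le_mul_of_nonneg_left hznear.le (norm_nonneg a)
        have := neg_abs_le (inner ℝ a (N • q - z) : ℝ)
        linarith
      rw [hc_def, he_def]
      nlinarith [norm_nonneg a, hδpos.le, hN0.le]
    have hPt : ∀ t ∈ Ioc (0 : ℝ) (κ * N),
        M.P z {ω | ω t ∈ (N : ℝ) • ball q' δ} ≤ ENNReal.ofReal (Real.exp (-c)) * m ^ k := by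
      intro t ht
      refine (prob_le_exp M z t a c hBm hB).trans ?_
      apply mul_le_mul_right
      exact moment_bound M a k t ht.1.le (ht.2.trans hkk) z hzE
    calc ∫⁻ t in Ioc (0 : ℝ) (κ * n), M.P z {ω | ω t ∈ (n : ℝ) • ball q' δ}
        ≤ ∫⁻ _ in Ioc (0 : ℝ) (κ * N), (ENNReal.ofReal (Real.exp (-c)) * m ^ k) := by
          exact setLIntegral_mono measurable_const fun t ht => hPt t ht
      _ = (ENNReal.ofReal (Real.exp (-c)) * m ^ k) * ENNReal.ofReal (κ * N) := by
          rw [setLIntegral_const, Real.volume_Ioc, sub_zero]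
      _ = ENNReal.ofReal Bn := by
          rw [hBn_def, hm_eq, ← ENNReal.ofReal_pow hm'0.le,
            ← ENNReal.ofReal_mul (Real.exp_nonneg _),
            ← ENNReal.ofReal_mul (by positivity)]
  -- step B : take logs
  have hlogSup : ENNReal.log (⨆ z ∈ nearE M.E q n δ,
      ∫⁻ t in Ioc (0 : ℝ) (κ * n), M.P z {ω | ω t ∈ (n : ℝ) • ball q' δ})
      ≤ (Real.log Bn : EReal) := by
    refine le_trans (ENNReal.log_monotone hSup) ?_
    rw [ENNReal.log_ofReal_of_pos hBnpos]
  have hmul : ((N⁻¹ : ℝ) : EReal) * ENNReal.log (⨆ z ∈ nearE M.E q n δ,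
      ∫⁻ t in Ioc (0 : ℝ) (κ * n), M.P z {ω | ω t ∈ (n : ℝ) • ball q' δ})
      ≤ ((N⁻¹ * Real.log Bn : ℝ) : EReal) := by
    rw [EReal.coe_mul]
    exact mul_le_mul_of_nonneg_left hlogSup (by exact_mod_cast inv_nonneg.mpr hN0.le)
  refine le_trans hmul ?_
  -- final real computation
  have hlogBn : Real.log Bn = -c + (k : ℝ) * C + Real.log (κ * N) := by
    rw [hBn_def, Real.log_mul (by positivity) (by positivity),
      Real.log_mul (by positivity) (by positivity), Real.log_exp, Real.log_pow, hC_def]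
  have hfinal : N⁻¹ * Real.log Bn ≤ -A := by
    rw [inv_mul_le_iff₀ hN0, hlogBn, hc_def]
    have hl : Real.log (κ * N) + C ≤ 1 / 4 * N := by
      rw [← add_div] at hlogn
      have := (div_le_iff₀ hN0).mp hlogn
      linarith
    nlinarith [mul_le_mul_of_nonneg_right hk1 hC0, mul_le_mul_of_nonneg_right hκC hN0.le,
      mul_le_mul_of_nonneg_right he hN0.le]
  calc ((N⁻¹ * Real.log Bn : ℝ) : EReal) ≤ ((-A : ℝ) : EReal) := by exact_mod_cast hfinal
    _ = -(A : EReal) := by rw [EReal.coe_neg]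

end GreenLDP
end
end

section
/- Under condition (H2), for every δ > 0, every t ∈ [0,1], every z ∈ E and every n > 0, ℙ_z(|Z(t) − z| ≥ nδ) ≤ 2d · M₁ · exp(−δn/(2d)), where M₁ := sup_{a ∈ ℝ^d : |a| = 1} φ̂(a). -/
open MeasureTheory Filter Set Metric
open scoped ENNReal Topology Pointwise

noncomputable section

namespace GreenLDP

variable {d : ℕ}

/-- Some coordinate is large: `‖x‖ ≤ d * |x i|` for some `i`. -/
lemma exists_coord_large {d : ℕ} (hd : 1 ≤ d) (x : Sp d) :
    ∃ i : Fin d, ‖x‖ ≤ (d : ℝ) * |x i| := by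
  have hne : (Finset.univ : Finset (Fin d)).Nonempty := by
    simpa [Finset.univ_nonempty_iff] using Fin.pos_iff_nonempty.mp hd
  obtain ⟨i, _, hi⟩ := Finset.exists_max_image Finset.univ (fun j => |x j|) hne
  refine ⟨i, ?_⟩
  have hsq : ‖x‖ ^ 2 ≤ ((d : ℝ) * |x i|) ^ 2 := by
    have hx : ‖x‖ ^ 2 = ∑ j, ‖x j‖ ^ 2 := EuclideanSpace.norm_eq x ▸ by
      rw [Real.sq_sqrt (Finset.sum_nonneg fun j _ => by positivity)]
    rw [hx]
    calc ∑ j, ‖x j‖ ^ 2 ≤ ∑ _j : Fin d, |x i| ^ 2 := by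
          refine Finset.sum_le_sum fun j _ => ?_
          have := hi j (Finset.mem_univ j)
          simpa [Real.norm_eq_abs, sq_abs] using
            pow_le_pow_left₀ (abs_nonneg _) this 2
      _ = (d : ℝ) * |x i| ^ 2 := by simp [Finset.sum_const, mul_comm]
      _ ≤ ((d : ℝ) * |x i|) ^ 2 := by
          have h1 : (1 : ℝ) ≤ (d : ℝ) := by exact_mod_cast hd
          nlinarith [sq_nonneg (x i)]
  exact (pow_le_pow_iff_left₀ (norm_nonneg x) (by positivity) two_ne_zero).mp hsq

/-- Chernoff-type bound for a single direction. -/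
lemma chernoff_dir {d : ℕ} (M : MarkovSetup d)
    (a : Sp d) (r t : ℝ) (ht : t ∈ Icc (0:ℝ) 1) (z : Sp d) (hz : z ∈ M.E) :
    M.P z {ω | r ≤ (inner ℝ a (ω t - z) : ℝ)} ≤
      mgf M.E M.P a * ENNReal.ofReal (Real.exp (-r)) := by
  set f : Path d → ℝ≥0∞ :=
    fun ω => ENNReal.ofReal (Real.exp ((inner ℝ a (ω t - z) : ℝ))) with hf_def
  have hf : Measurable f := by
    apply Measurable.ennreal_ofReal
    apply Real.measurable_exp.comp
    exact (Continuous.inner continuous_const continuous_id).measurable.comp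
      ((measurable_pi_apply t).sub measurable_const)
  set ε : ℝ≥0∞ := ENNReal.ofReal (Real.exp r) with hε_def
  have hε0 : ε ≠ 0 := by
    simp [hε_def, ENNReal.ofReal_eq_zero, not_le, Real.exp_pos]
  have hεtop : ε ≠ ⊤ := ENNReal.ofReal_ne_top
  have hsub : {ω : Path d | r ≤ (inner ℝ a (ω t - z) : ℝ)} ⊆ {ω | ε ≤ f ω} := by
    intro ω hω
    exact ENNReal.ofReal_le_ofReal (Real.exp_le_exp.2 hω)
  have key : ε * M.P z {ω | r ≤ (inner ℝ a (ω t - z) : ℝ)} ≤ ∫⁻ ω, f ω ∂ M.P z :=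
    le_trans (mul_le_mul_right (measure_mono hsub) ε)
      (mul_meas_ge_le_lintegral₀ hf.aemeasurable ε)
  have hm : ∫⁻ ω, f ω ∂ M.P z ≤ mgf M.E M.P a := by
    have h1 : ∫⁻ ω, f ω ∂ M.P z ≤
        ⨆ t ∈ Icc (0:ℝ) 1, ∫⁻ ω,
          ENNReal.ofReal (Real.exp ((inner ℝ a (ω t - z) : ℝ))) ∂ M.P z :=
      le_biSup (fun s => ∫⁻ ω,
        ENNReal.ofReal (Real.exp ((inner ℝ a (ω s - z) : ℝ))) ∂ M.P z) ht
    exact h1.trans (le_biSup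
      (fun z => ⨆ t ∈ Icc (0:ℝ) 1, ∫⁻ ω,
        ENNReal.ofReal (Real.exp ((inner ℝ a (ω t - z) : ℝ))) ∂ M.P z) hz)
  have : M.P z {ω | r ≤ (inner ℝ a (ω t - z) : ℝ)} ≤ mgf M.E M.P a / ε := by
    rw [ENNReal.le_div_iff_mul_le (Or.inl hε0) (Or.inl hεtop), mul_comm]
    exact key.trans hm
  refine this.trans ?_
  rw [ENNReal.div_eq_inv_mul, mul_comm, hε_def,
    ← ENNReal.ofReal_inv_of_pos (Real.exp_pos r), ← Real.exp_neg]

/-- Under (H2), for every `δ > 0`, `t ∈ [0,1]`, `z ∈ E` and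
`n > 0`, `ℙ_z(|Z(t) − z| ≥ nδ) ≤ 2d · M₁ · exp(−δn/(2d))` where
`M₁ = sup_{|a|=1} φ̂(a)`. -/
theorem increment_tail_bound
    {d : ℕ} (M : MarkovSetup d) (hH2 : H2 M.E M.P) :
    ∀ δ : ℝ, 0 < δ → ∀ t ∈ Icc (0 : ℝ) 1, ∀ z ∈ M.E, ∀ n : ℝ, 0 < n →
      M.P z {ω | n * δ ≤ ‖ω t - z‖} ≤
        (2 * (d : ℝ≥0∞)) * (⨆ a : {a : Sp d // ‖a‖ = 1}, mgf M.E M.P a.1) *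
          ENNReal.ofReal (Real.exp (-(δ * n) / (2 * (d : ℝ)))) := by
  intro δ hδ t ht z hz n hn
  rcases Nat.eq_zero_or_pos d with hd | hd
  · subst hd
    have hempty : {ω : Path 0 | n * δ ≤ ‖ω t - z‖} = ∅ := by
      ext ω
      simp only [mem_setOf_eq, mem_empty_iff_false, iff_false, not_le]
      have : ω t - z = 0 := Subsingleton.elim _ _
      rw [this, norm_zero]
      positivity
    simp [hempty]
  have hd1 : 1 ≤ d := hd
  have hdR : (0:ℝ) < (d : ℝ) := by exact_mod_cast hd
  set r : ℝ := δ * n / (2 * d) with hr_def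
  have hr_pos : 0 < r := by positivity
  set M₁ : ℝ≥0∞ := ⨆ a : {a : Sp d // ‖a‖ = 1}, mgf M.E M.P a.1 with hM₁
  set e : ℝ≥0∞ := ENNReal.ofReal (Real.exp (-r)) with he
  -- the event is covered by 2d directional events
  have hcover : {ω : Path d | n * δ ≤ ‖ω t - z‖} ⊆
      ⋃ i : Fin d,
        ({ω : Path d | r ≤ (inner ℝ (EuclideanSpace.single i (1:ℝ)) (ω t - z) : ℝ)} ∪
         {ω : Path d | r ≤ (inner ℝ (-(EuclideanSpace.single i (1:ℝ))) (ω t - z) : ℝ)}) := by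
    intro ω hω
    obtain ⟨i, hi⟩ := exists_coord_large hd1 (ω t - z)
    have hxi : r ≤ |(ω t - z) i| := by
      have h1 : n * δ ≤ (d : ℝ) * |(ω t - z) i| := le_trans hω hi
      rw [hr_def]
      rw [div_le_iff₀ (by positivity)]
      nlinarith [abs_nonneg ((ω t - z) i)]
    have hinner : (inner ℝ (EuclideanSpace.single i (1:ℝ)) (ω t - z) : ℝ) = (ω t - z) i := by
      simp [EuclideanSpace.inner_single_left]
    refine mem_iUnion.2 ⟨i, ?_⟩
    rcases le_abs.1 hxi with h | h
    · exact Or.inl (by simpa [hinner] using h)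
    · refine Or.inr ?_
      have : (inner ℝ (-(EuclideanSpace.single i (1:ℝ))) (ω t - z) : ℝ)
          = -((ω t - z) i) := by rw [inner_neg_left, hinner]
      rw [mem_setOf_eq, this]; simpa using h
  have hdir : ∀ a : Sp d, ‖a‖ = 1 →
      M.P z {ω | r ≤ (inner ℝ a (ω t - z) : ℝ)} ≤ M₁ * e := by
    intro a ha
    refine (chernoff_dir M a r t ht z hz).trans ?_
    exact mul_le_mul_left
      (le_iSup (fun b : {a : Sp d // ‖a‖ = 1} => mgf M.E M.P b.1) ⟨a, ha⟩) e
  have hnorm1 : ∀ i : Fin d, ‖EuclideanSpace.single i (1:ℝ)‖ = 1 := by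
    intro i; rw [EuclideanSpace.norm_single]; simp
  calc M.P z {ω | n * δ ≤ ‖ω t - z‖}
      ≤ ∑' i : Fin d, M.P z
        ({ω : Path d | r ≤ (inner ℝ (EuclideanSpace.single i (1:ℝ)) (ω t - z) : ℝ)} ∪
         {ω : Path d | r ≤ (inner ℝ (-(EuclideanSpace.single i (1:ℝ))) (ω t - z) : ℝ)}) :=
        le_trans (measure_mono hcover) (measure_iUnion_le _)
    _ ≤ ∑' _i : Fin d, (M₁ * e + M₁ * e) := by
        refine ENNReal.tsum_le_tsum fun i => ?_
        refine (measure_union_le _ _).trans ?_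
        exact add_le_add (hdir _ (hnorm1 i))
          (hdir _ (by rw [norm_neg]; exact hnorm1 i))
    _ = (d : ℝ≥0∞) * (M₁ * e + M₁ * e) := by
        rw [tsum_fintype, Finset.sum_const, Finset.card_univ, Fintype.card_fin,
          nsmul_eq_mul]
    _ = (2 * (d : ℝ≥0∞)) * M₁ * e := by ring
    _ = (2 * (d : ℝ≥0∞)) * M₁ *
          ENNReal.ofReal (Real.exp (-(δ * n) / (2 * (d : ℝ)))) := by
        rw [he, neg_div]

end GreenLDP
end
end

section
/- Under condition (H2), for any q,q' ∈ ℝ^d, any δ, δ' > 0 and any T > 0, liminf_{n→∞} inf_{z ∈ E : |z − nq| < δn} (1/n) log G(z, nB(q',δ')) ≥ liminf_{n→∞} inf_{z ∈ E : |z − nq| < δn} (1/n) log ℙ_z(Z(Tn) ∈ nB(q', δ'/2)), where B(q',δ') denotes the open ball of radius δ' centered at q'. -/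
open MeasureTheory Filter Set Metric
open scoped ENNReal Topology Pointwise

noncomputable section

namespace GreenLDP

variable {d : ℕ}

/-! ### Auxiliary lemmas for Statement 14 -/

section Aux14

/-- The `ℓ²` norm is bounded by the `ℓ¹` norm. -/
lemma norm_le_sum_abs (x : Sp d) : ‖x‖ ≤ ∑ i, |x i| := by
  rw [EuclideanSpace.norm_eq]
  have h0 : (0:ℝ) ≤ ∑ i, |x i| := Finset.sum_nonneg fun i _ => abs_nonneg _
  have h1 : (∑ i, ‖x i‖ ^ 2) ≤ (∑ i, |x i|) ^ 2 := by
    rw [sq, Finset.sum_mul]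
    refine Finset.sum_le_sum fun i _ => ?_
    calc ‖x i‖ ^ 2 = |x i| * |x i| := by rw [Real.norm_eq_abs, sq]
      _ ≤ |x i| * ∑ j, |x j| :=
        mul_le_mul_of_nonneg_left
          (Finset.single_le_sum (fun j _ => abs_nonneg (x j)) (Finset.mem_univ i))
          (abs_nonneg _)
  calc Real.sqrt (∑ i, ‖x i‖ ^ 2) ≤ Real.sqrt ((∑ i, |x i|) ^ 2) := Real.sqrt_le_sqrt h1
    _ = ∑ i, |x i| := Real.sqrt_sq h0

/-- Exponential Chebyshev bound in a single direction `a`. -/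
lemma cheb_one (M : MarkovSetup d) {w : Sp d} (hw : w ∈ M.E) {s : ℝ}
    (hs : s ∈ Icc (0:ℝ) 1) (a : Sp d) (c : ℝ) :
    M.P w {ω | c ≤ (inner ℝ a (ω s - w) : ℝ)} ≤
      mgf M.E M.P a * ENNReal.ofReal (Real.exp (-c)) := by
  have hm : Measurable fun ω : Path d => (inner ℝ a (ω s - w) : ℝ) := by
    have h1 : Measurable fun ω : Path d => ω s - w :=
      (measurable_pi_apply s).sub measurable_const
    exact ((continuous_const.inner continuous_id).measurable).comp h1
  have hfm : Measurable fun ω : Path d =>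
      ENNReal.ofReal (Real.exp (inner ℝ a (ω s - w))) :=
    ENNReal.measurable_ofReal.comp (Real.measurable_exp.comp hm)
  have key := mul_meas_ge_le_lintegral₀ (μ := M.P w) hfm.aemeasurable
    (ENNReal.ofReal (Real.exp c))
  have hset : {x : Path d | ENNReal.ofReal (Real.exp c) ≤
        ENNReal.ofReal (Real.exp (inner ℝ a (x s - w)))}
      = {ω : Path d | c ≤ (inner ℝ a (ω s - w) : ℝ)} := by
    ext ω
    simp only [Set.mem_setOf_eq,
      ENNReal.ofReal_le_ofReal_iff (Real.exp_pos _).le, Real.exp_le_exp]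
  rw [hset] at key
  have hI : (∫⁻ ω, ENNReal.ofReal (Real.exp (inner ℝ a (ω s - w))) ∂ M.P w)
      ≤ mgf M.E M.P a := by
    refine le_trans (le_biSup
      (fun t => ∫⁻ ω, ENNReal.ofReal (Real.exp (inner ℝ a (ω t - w))) ∂ M.P w) hs) ?_
    exact le_biSup
      (fun z => ⨆ t ∈ Icc (0:ℝ) 1,
        ∫⁻ ω, ENNReal.ofReal (Real.exp (inner ℝ a (ω t - z))) ∂ M.P z) hw
  have hε0 : ENNReal.ofReal (Real.exp c) ≠ 0 := by
    simp [ENNReal.ofReal_pos.2 (Real.exp_pos c), ne_of_gt]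
  have hdiv : M.P w {ω | c ≤ (inner ℝ a (ω s - w) : ℝ)} ≤
      mgf M.E M.P a / ENNReal.ofReal (Real.exp c) :=
    (ENNReal.le_div_iff_mul_le (Or.inl hε0) (Or.inl ENNReal.ofReal_ne_top)).2
      (by rw [mul_comm]; exact key.trans hI)
  rwa [div_eq_mul_inv, ← ENNReal.ofReal_inv_of_pos (Real.exp_pos c),
    ← Real.exp_neg] at hdiv

/-- The constant in the exponential Chebyshev bound: sum of `φ̂(±eᵢ)`. -/
def chebC (M : MarkovSetup d) : ℝ≥0∞ :=
  ∑ i : Fin d, (mgf M.E M.P (EuclideanSpace.single i 1) +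
    mgf M.E M.P (EuclideanSpace.single i (-1)))

/-- Exponential Chebyshev bound for the norm of the displacement. -/
lemma cheb (M : MarkovSetup d) {w : Sp d} (hw : w ∈ M.E) {s : ℝ}
    (hs : s ∈ Icc (0:ℝ) 1) {r : ℝ} (hr : 0 < r) :
    M.P w {ω | r ≤ ‖ω s - w‖} ≤ chebC M * ENNReal.ofReal (Real.exp (-(r / d))) := by
  rcases Nat.eq_zero_or_pos d with hd | hd
  · have hempty : {ω : Path d | r ≤ ‖ω s - w‖} = ∅ := by
      ext ω
      simp only [Set.mem_setOf_eq, Set.mem_empty_iff_false, iff_false, not_le]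
      have hzero : ‖ω s - w‖ = 0 := by
        rw [EuclideanSpace.norm_eq]
        subst hd
        simp
      linarith
    simp [hempty]
  · have hd0 : (0:ℝ) < d := by exact_mod_cast hd
    have cover : {ω : Path d | r ≤ ‖ω s - w‖} ⊆
        ⋃ i : Fin d,
          ({ω : Path d | r/d ≤ (inner ℝ (EuclideanSpace.single i (1:ℝ)) (ω s - w) : ℝ)}
          ∪ {ω : Path d | r/d ≤ (inner ℝ (EuclideanSpace.single i (-1:ℝ)) (ω s - w) : ℝ)}) := by
      intro ω hω
      set x := ω s - w with hx
      have hsum : r ≤ ∑ i, |x i| := le_trans hω (norm_le_sum_abs x)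
      have hex : ∃ i : Fin d, r/d ≤ |x i| := by
        by_contra hcon
        push_neg at hcon
        have hlt : (∑ i, |x i|) < ∑ _i : Fin d, r/d :=
          Finset.sum_lt_sum_of_nonempty (Finset.univ_nonempty_iff.2 ⟨⟨0, hd⟩⟩)
            fun i _ => hcon i
        have heq : (∑ _i : Fin d, r/d) = r := by
          rw [Finset.sum_const, Finset.card_univ, Fintype.card_fin, nsmul_eq_mul]
          field_simp
        rw [heq] at hlt
        linarith
      obtain ⟨i, hi⟩ := hex
      rcases le_abs.1 hi with h | h
      · refine Set.mem_iUnion.2 ⟨i, Or.inl ?_⟩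
        rw [hx] at h
        simp only [Set.mem_setOf_eq, EuclideanSpace.inner_single_left,
          conj_trivial, one_mul]
        simpa using h
      · refine Set.mem_iUnion.2 ⟨i, Or.inr ?_⟩
        rw [hx] at h
        simp only [Set.mem_setOf_eq, EuclideanSpace.inner_single_left,
          conj_trivial, neg_mul, one_mul]
        simpa [neg_sub] using h
    calc M.P w {ω | r ≤ ‖ω s - w‖}
        ≤ ∑ i : Fin d, M.P w
          ({ω : Path d | r/d ≤ (inner ℝ (EuclideanSpace.single i (1:ℝ)) (ω s - w) : ℝ)}
          ∪ {ω : Path d | r/d ≤ (inner ℝ (EuclideanSpace.single i (-1:ℝ)) (ω s - w) : ℝ)}) :=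
        (measure_mono cover).trans (measure_iUnion_fintype_le _ _)
      _ ≤ ∑ i : Fin d, ((mgf M.E M.P (EuclideanSpace.single i 1) +
            mgf M.E M.P (EuclideanSpace.single i (-1))) *
            ENNReal.ofReal (Real.exp (-(r/d)))) := by
          refine Finset.sum_le_sum fun i _ => ?_
          refine (measure_union_le _ _).trans ?_
          rw [add_mul]
          exact add_le_add (cheb_one M hw hs _ _) (cheb_one M hw hs _ _)
      _ = chebC M * ENNReal.ofReal (Real.exp (-(r/d))) := by
          rw [chebC, Finset.sum_mul]

/-- Uniform smallness of large displacements over a unit time window. -/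
lemma disp (M : MarkovSetup d) (hH2 : H2 M.E M.P) {δ' : ℝ} (hδ' : 0 < δ') :
    ∃ N : ℕ, 1 ≤ N ∧ ∀ n : ℕ, N ≤ n → ∀ w ∈ M.E, ∀ s ∈ Icc (0:ℝ) 1,
      M.P w {ω | (n:ℝ) * (δ'/2) ≤ ‖ω s - w‖} ≤ 2⁻¹ := by
  have hC : chebC M ≠ ⊤ := by
    refine (ne_of_lt ?_)
    rw [chebC]
    exact ENNReal.sum_lt_top.2 fun i _ => ENNReal.add_lt_top.2 ⟨hH2 _, hH2 _⟩
  have htend : Tendsto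
      (fun n : ℕ => chebC M * ENNReal.ofReal (Real.exp (-((n:ℝ) * (δ'/2) / d))))
      atTop (𝓝 0) := by
    by_cases hd : d = 0
    · have hc0 : chebC M = 0 := by subst hd; simp [chebC]
      simpa [hc0] using (tendsto_const_nhds :
        Tendsto (fun _ : ℕ => (0:ℝ≥0∞)) atTop (𝓝 0))
    · have hd0 : (0:ℝ) < d := by
        exact_mod_cast Nat.pos_of_ne_zero hd
      have hmain : Tendsto (fun n : ℕ => (n:ℝ) * (δ'/2) / d) atTop atTop :=
        (tendsto_natCast_atTop_atTop.atTop_mul_const (by positivity)).atTop_div_const hd0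
      have h1 : Tendsto (fun n : ℕ => -((n:ℝ) * (δ'/2) / d)) atTop atBot :=
        tendsto_neg_atTop_atBot.comp hmain
      have h2 : Tendsto (fun n : ℕ =>
          ENNReal.ofReal (Real.exp (-((n:ℝ) * (δ'/2) / d)))) atTop (𝓝 0) := by
        rw [show (0:ℝ≥0∞) = ENNReal.ofReal 0 by simp]
        exact (ENNReal.continuous_ofReal.tendsto 0).comp (Real.tendsto_exp_atBot.comp h1)
      simpa using ENNReal.Tendsto.const_mul h2 (Or.inr hC)
  obtain ⟨N, hN⟩ := eventually_atTop.1
    (htend.eventually (Iio_mem_nhds (by norm_num : (0:ℝ≥0∞) < 2⁻¹)))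
  refine ⟨max N 1, le_max_right _ _, fun n hn w hw s hs => ?_⟩
  have h1n : 1 ≤ n := le_trans (le_max_right N 1) hn
  have hn0 : (0:ℝ) < n := by exact_mod_cast h1n
  have hr : 0 < (n:ℝ) * (δ'/2) := by positivity
  exact (cheb M hw hs hr).trans (le_of_lt (hN n (le_trans (le_max_left _ _) hn)))

/-- The Markov property estimate: the probability of being in `B'` at time `s₀`
and making a displacement of size `≥ c` during the following time `s` is at most
half the probability of being in `B'` at time `s₀`. -/
lemma markov_bad (M : MarkovSetup d) {z : Sp d} (hz : z ∈ M.E) {s₀ s : ℝ}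
    (hs₀ : 0 ≤ s₀) {B' : Set (Sp d)} (hB' : MeasurableSet B') {c : ℝ}
    (hbound : ∀ w ∈ M.E, M.P w {ω | c ≤ ‖ω s - w‖} ≤ 2⁻¹) :
    M.P z {ω | ω s₀ ∈ B' ∧ c ≤ ‖ω (s₀ + s) - ω s₀‖} ≤
      2⁻¹ * M.P z {ω | ω s₀ ∈ B'} := by
  classical
  set S : Set (Path d) := {ω' | ω' 0 ∈ B' ∧ c ≤ ‖ω' s - ω' 0‖} with hS
  have hSm : MeasurableSet S := by
    refine MeasurableSet.inter ?_ ?_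
    · exact (measurable_pi_apply 0) hB'
    · exact ((measurable_pi_apply s).sub (measurable_pi_apply 0)).norm
        measurableSet_Ici
  set F : Path d → ℝ≥0∞ := S.indicator 1 with hF
  have hFm : Measurable F := measurable_one.indicator hSm
  have hmk := M.markov z hz s₀ hs₀ F hFm
  set Tset : Set (Path d) := {ω | ω s₀ ∈ B' ∧ c ≤ ‖ω (s₀ + s) - ω s₀‖} with hT
  have hTm : MeasurableSet Tset := by
    refine MeasurableSet.inter ?_ ?_
    · exact (measurable_pi_apply s₀) hB'
    · exact ((measurable_pi_apply (s₀ + s)).sub (measurable_pi_apply s₀)).norm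
        measurableSet_Ici
  have hls : ∀ ω : Path d, F (fun t => ω (s₀ + t)) = Tset.indicator 1 ω := by
    intro ω
    simp only [hF, hS, hT, Set.indicator_apply, Set.mem_setOf_eq, add_zero,
      Pi.one_apply]
  have hlhs : (∫⁻ ω, F (fun t => ω (s₀ + t)) ∂ M.P z) = M.P z Tset := by
    rw [show (fun ω : Path d => F (fun t => ω (s₀ + t))) = Tset.indicator 1
      from funext hls]
    exact lintegral_indicator_one hTm
  set Bev : Set (Path d) := {ω | ω s₀ ∈ B'} with hBev
  have hBevm : MeasurableSet Bev := (measurable_pi_apply s₀) hB'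
  have hinner : ∀ᵐ ω ∂ M.P z,
      (∫⁻ ω', F ω' ∂ M.P (ω s₀)) ≤ 2⁻¹ * Bev.indicator 1 ω := by
    filter_upwards [M.stays z hz] with ω hω
    have hw : ω s₀ ∈ M.E := hω s₀ hs₀
    set w := ω s₀ with hwdef
    rw [hF, lintegral_indicator_one hSm]
    have hU : M.P w {ω' : Path d | ω' 0 = w} = 1 := M.start w hw
    have hUm : MeasurableSet {ω' : Path d | ω' 0 = w} := by
      have heq : {ω' : Path d | ω' 0 = w} = (fun ω' : Path d => ω' 0) ⁻¹' {w} := rfl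
      rw [heq]
      exact (measurable_pi_apply 0) (measurableSet_singleton w)
    have hUc : M.P w {ω' : Path d | ω' 0 = w}ᶜ = 0 := by
      haveI := M.prob w
      rw [measure_compl hUm (measure_ne_top _ _), hU, measure_univ, tsub_self]
    have hsplit : M.P w S ≤
        M.P w (S ∩ {ω' : Path d | ω' 0 = w}) + M.P w {ω' : Path d | ω' 0 = w}ᶜ := by
      refine le_trans (measure_mono ?_) (measure_union_le _ _)
      intro x hx
      by_cases hx0 : x ∈ {ω' : Path d | ω' 0 = w}
      · exact Or.inl ⟨hx, hx0⟩
      · exact Or.inr hx0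
    rw [hUc, add_zero] at hsplit
    by_cases hwB : w ∈ B'
    · have hsub : S ∩ {ω' : Path d | ω' 0 = w} ⊆ {ω' : Path d | c ≤ ‖ω' s - w‖} := by
        intro x hx
        have := hx.1.2
        rw [hx.2] at this
        exact this
      have : M.P w S ≤ 2⁻¹ :=
        hsplit.trans ((measure_mono hsub).trans (hbound w hw))
      rwa [Set.indicator_of_mem (by exact hwB) 1, Pi.one_apply, mul_one]
    · have hsub : S ∩ {ω' : Path d | ω' 0 = w} ⊆ (∅ : Set (Path d)) := by
        intro x hx
        exact absurd (hx.2 ▸ hx.1.1) hwB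
      have h0 : M.P w S = 0 :=
        le_antisymm (hsplit.trans (by
          simpa using measure_mono (μ := M.P w) hsub)) (zero_le)
      rw [h0, Set.indicator_of_notMem (by exact hwB) 1, mul_zero]
  have hind : ∀ ω : Path d, Bev.indicator (1 : Path d → ℝ≥0∞) ω =
      Bev.indicator 1 ω := fun _ => rfl
  calc M.P z Tset = ∫⁻ ω, F (fun t => ω (s₀ + t)) ∂ M.P z := hlhs.symm
    _ = ∫⁻ ω, ∫⁻ ω', F ω' ∂ M.P (ω s₀) ∂ M.P z := hmk
    _ ≤ ∫⁻ ω, 2⁻¹ * Bev.indicator 1 ω ∂ M.P z := lintegral_mono_ae hinner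
    _ = 2⁻¹ * ∫⁻ ω, Bev.indicator 1 ω ∂ M.P z :=
        lintegral_const_mul' _ _ (by simp)
    _ = 2⁻¹ * M.P z Bev := by rw [lintegral_indicator_one hBevm]

/-- Distributivity of multiplication by a nonnegative real over `(a : ℝ) + b`
in `EReal`. -/
lemma ereal_mul_add_real {x : ℝ} (hx : 0 ≤ x) (a : ℝ) (b : EReal) :
    (x : EReal) * ((a : EReal) + b) = ((x * a : ℝ) : EReal) + (x : EReal) * b := by
  rcases eq_or_lt_of_le hx with hx0 | hx0
  · induction b using EReal.rec with
    | bot => simp [← hx0]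
    | coe b => rw [← hx0]; norm_cast; ring
    | top => simp [← hx0]
  · have hx' : (0 : EReal) < (x : EReal) := by exact_mod_cast hx0
    induction b using EReal.rec with
    | bot => rw [EReal.add_bot, EReal.mul_bot_of_pos hx', EReal.add_bot]
    | coe b => norm_cast; ring
    | top => rw [EReal.coe_add_top, EReal.mul_top_of_pos hx', EReal.coe_add_top]

end Aux14

set_option maxHeartbeats 1000000 in
/-- Under (H2), for any `q, q' ∈ ℝ^d`, `δ, δ' > 0` and `T > 0`,
`liminf_{n→∞} inf_{z∈E,|z−nq|<δn} (1/n) log G(z, nB(q',δ')) ≥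
liminf_{n→∞} inf_{z∈E,|z−nq|<δn} (1/n) log ℙ_z(Z(Tn) ∈ nB(q',δ'/2))`. -/
theorem green_lower_via_prob
    {d : ℕ} (M : MarkovSetup d)
    (hGfin : ∀ z ∈ M.E, ∀ B : Set (Sp d), IsCompact B → green M.P z B < ⊤)
    (hH2 : H2 M.E M.P) :
    ∀ q q' : Sp d, ∀ δ δ' T : ℝ, 0 < δ → 0 < δ' → 0 < T →
      liminf (fun n : ℕ =>
        ((((n : ℝ)⁻¹ : ℝ)) : EReal) * ENNReal.log
          (⨅ z ∈ nearE M.E q n δ,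
            M.P z {ω | ω (T * n) ∈ (n : ℝ) • ball q' (δ' / 2)})) atTop ≤
      liminf (fun n : ℕ =>
        ((((n : ℝ)⁻¹ : ℝ)) : EReal) * ENNReal.log
          (⨅ z ∈ nearE M.E q n δ, green M.P z ((n : ℝ) • ball q' δ'))) atTop := by
  intro q q' δ δ' T hδ hδ' hT
  obtain ⟨N, hN1, hN⟩ := disp M hH2 hδ'
  -- pointwise estimate: `2⁻¹ ℙ_z(Z(Tn) ∈ nB(q',δ'/2)) ≤ G(z, nB(q',δ'))`
  have hzstep : ∀ n : ℕ, N ≤ n → ∀ z ∈ nearE M.E q n δ,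
      2⁻¹ * M.P z {ω | ω (T * n) ∈ (n : ℝ) • ball q' (δ' / 2)} ≤
        green M.P z ((n : ℝ) • ball q' δ') := by
    intro n hn z hzn
    haveI := M.prob z
    have hzE : z ∈ M.E := hzn.1
    have hn1 : 1 ≤ n := le_trans hN1 hn
    have hn0 : (0:ℝ) < n := by exact_mod_cast hn1
    have hTn : 0 ≤ T * (n:ℝ) := by positivity
    have hB' : (n:ℝ) • ball q' (δ'/2) = ball ((n:ℝ) • q') ((n:ℝ) * (δ'/2)) := by
      rw [_root_.smul_ball (ne_of_gt hn0), Real.norm_eq_abs, abs_of_pos hn0]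
    have hBf : (n:ℝ) • ball q' δ' = ball ((n:ℝ) • q') ((n:ℝ) * δ') := by
      rw [_root_.smul_ball (ne_of_gt hn0), Real.norm_eq_abs, abs_of_pos hn0]
    have hB'm : MeasurableSet ((n:ℝ) • ball q' (δ'/2)) := by
      rw [hB']; exact measurableSet_ball
    set p := M.P z {ω | ω (T * n) ∈ (n : ℝ) • ball q' (δ' / 2)} with hp
    have hslice : ∀ t ∈ Ioc (T * (n:ℝ)) (T * n + 1),
        2⁻¹ * p ≤ M.P z {ω | ω t ∈ (n:ℝ) • ball q' δ'} := by
      intro t ht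
      have hsI : t - T * n ∈ Icc (0:ℝ) 1 := ⟨by linarith [ht.1], by linarith [ht.2]⟩
      have hbad := markov_bad M hzE (s₀ := T * n) (s := t - T * n) hTn hB'm
        (fun w hw => hN n hn w hw _ hsI)
      have hsub : {ω : Path d | ω (T * (n:ℝ)) ∈ (n:ℝ) • ball q' (δ'/2)} ⊆
          {ω : Path d | ω t ∈ (n:ℝ) • ball q' δ'} ∪
          {ω : Path d | ω (T * (n:ℝ)) ∈ (n:ℝ) • ball q' (δ'/2) ∧
            (n:ℝ) * (δ'/2) ≤ ‖ω (T * (n:ℝ) + (t - T * (n:ℝ))) - ω (T * (n:ℝ))‖} := by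
        intro ω hω
        by_cases hc : (n:ℝ) * (δ'/2) ≤ ‖ω (T * (n:ℝ) + (t - T * (n:ℝ))) - ω (T * (n:ℝ))‖
        · exact Or.inr ⟨hω, hc⟩
        · left
          push_neg at hc
          have ht' : T * (n:ℝ) + (t - T * (n:ℝ)) = t := by ring
          rw [ht'] at hc
          have h1 : ω (T * (n:ℝ)) ∈ ball ((n:ℝ) • q') ((n:ℝ) * (δ'/2)) := hB' ▸ hω
          rw [mem_ball_iff_norm] at h1
          show ω t ∈ (n:ℝ) • ball q' δ'
          rw [hBf, mem_ball_iff_norm]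
          calc ‖ω t - (n:ℝ) • q'‖
              ≤ ‖ω t - ω (T * (n:ℝ))‖ + ‖ω (T * (n:ℝ)) - (n:ℝ) • q'‖ := by
                have := norm_add_le (ω t - ω (T * (n:ℝ)))
                  (ω (T * (n:ℝ)) - (n:ℝ) • q')
                simpa [sub_add_sub_cancel] using this
            _ < (n:ℝ) * (δ'/2) + (n:ℝ) * (δ'/2) := add_lt_add hc h1
            _ = (n:ℝ) * δ' := by ring
      have h2 : p ≤ M.P z {ω | ω t ∈ (n:ℝ) • ball q' δ'} + 2⁻¹ * p := by
        refine le_trans (measure_mono hsub) ?_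
        refine (measure_union_le _ _).trans ?_
        exact add_le_add le_rfl hbad
      have hfin : 2⁻¹ * p ≠ ⊤ :=
        ENNReal.mul_ne_top (by simp) (measure_ne_top _ _)
      have h3 : 2⁻¹ * p + 2⁻¹ * p ≤
          M.P z {ω | ω t ∈ (n:ℝ) • ball q' δ'} + 2⁻¹ * p := by
        rw [← add_mul, ENNReal.inv_two_add_inv_two, one_mul]; exact h2
      exact (ENNReal.add_le_add_iff_right hfin).1 h3
    have h0 : 2⁻¹ * p = ∫⁻ _t in Ioc (T * (n:ℝ)) (T * n + 1), 2⁻¹ * p ∂(volume) := by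
      rw [setLIntegral_const, Real.volume_Ioc,
        show T * (n:ℝ) + 1 - T * (n:ℝ) = 1 by ring, ENNReal.ofReal_one, mul_one]
    calc 2⁻¹ * p = ∫⁻ _t in Ioc (T * (n:ℝ)) (T * n + 1), 2⁻¹ * p ∂(volume) := h0
      _ ≤ ∫⁻ t in Ioc (T * (n:ℝ)) (T * n + 1),
            M.P z {ω | ω t ∈ (n:ℝ) • ball q' δ'} ∂(volume) :=
          setLIntegral_mono' measurableSet_Ioc fun t ht => hslice t ht
      _ ≤ ∫⁻ t in Ioi (0:ℝ),
            M.P z {ω | ω t ∈ (n:ℝ) • ball q' δ'} ∂(volume) :=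
          lintegral_mono_set fun t ht => lt_of_le_of_lt hTn ht.1
      _ = green M.P z ((n:ℝ) • ball q' δ') := rfl
  -- infimum version
  have hkey : ∀ n : ℕ, N ≤ n →
      (⨅ z ∈ nearE M.E q n δ,
        M.P z {ω | ω (T * n) ∈ (n : ℝ) • ball q' (δ' / 2)}) ≤
      2 * ⨅ z ∈ nearE M.E q n δ, green M.P z ((n : ℝ) • ball q' δ') := by
    intro n hn
    have h1 : 2⁻¹ * (⨅ z ∈ nearE M.E q n δ,
        M.P z {ω | ω (T * n) ∈ (n : ℝ) • ball q' (δ' / 2)}) ≤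
        ⨅ z ∈ nearE M.E q n δ, green M.P z ((n : ℝ) • ball q' δ') := by
      refine le_iInf₂ fun z hzn => ?_
      exact le_trans (mul_le_mul_right (iInf₂_le z hzn) _) (hzstep n hn z hzn)
    calc (⨅ z ∈ nearE M.E q n δ,
          M.P z {ω | ω (T * n) ∈ (n : ℝ) • ball q' (δ' / 2)})
        = 2 * (2⁻¹ * ⨅ z ∈ nearE M.E q n δ,
            M.P z {ω | ω (T * n) ∈ (n : ℝ) • ball q' (δ' / 2)}) := by
          rw [← mul_assoc, ENNReal.mul_inv_cancel (by norm_num) (by norm_num), one_mul]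
      _ ≤ 2 * ⨅ z ∈ nearE M.E q n δ, green M.P z ((n : ℝ) • ball q' δ') :=
          mul_le_mul_right h1 _
  -- log of the estimate
  have hlog2 : ENNReal.log 2 = ((Real.log 2 : ℝ) : EReal) := by
    rw [show (2:ℝ≥0∞) = ENNReal.ofReal 2 by norm_num,
      ENNReal.log_ofReal_of_pos (by norm_num)]
  set w : ℕ → EReal := fun n => (((n:ℝ)⁻¹ * Real.log 2 : ℝ) : EReal) with hwdef
  set v : ℕ → EReal := fun n : ℕ =>
    ((((n : ℝ)⁻¹ : ℝ)) : EReal) * ENNReal.log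
      (⨅ z ∈ nearE M.E q n δ, green M.P z ((n : ℝ) • ball q' δ')) with hvdef
  have hev : ∀ᶠ n : ℕ in atTop,
      ((((n : ℝ)⁻¹ : ℝ)) : EReal) * ENNReal.log
        (⨅ z ∈ nearE M.E q n δ,
          M.P z {ω | ω (T * n) ∈ (n : ℝ) • ball q' (δ' / 2)}) ≤ (w + v) n := by
    filter_upwards [eventually_ge_atTop N] with n hn
    have hinv : (0:ℝ) ≤ (n:ℝ)⁻¹ := by positivity
    have hmono : ENNReal.log (⨅ z ∈ nearE M.E q n δ,
          M.P z {ω | ω (T * n) ∈ (n : ℝ) • ball q' (δ' / 2)}) ≤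
        ENNReal.log 2 + ENNReal.log
          (⨅ z ∈ nearE M.E q n δ, green M.P z ((n : ℝ) • ball q' δ')) := by
      rw [← ENNReal.log_mul_add]
      exact ENNReal.log_monotone (hkey n hn)
    calc ((((n : ℝ)⁻¹ : ℝ)) : EReal) * ENNReal.log
          (⨅ z ∈ nearE M.E q n δ,
            M.P z {ω | ω (T * n) ∈ (n : ℝ) • ball q' (δ' / 2)})
        ≤ ((((n : ℝ)⁻¹ : ℝ)) : EReal) * (ENNReal.log 2 + ENNReal.log
            (⨅ z ∈ nearE M.E q n δ, green M.P z ((n : ℝ) • ball q' δ'))) :=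
          mul_le_mul_of_nonneg_left hmono (by exact_mod_cast hinv)
      _ = (w + v) n := by
          rw [hlog2, ereal_mul_add_real hinv]
          simp only [Pi.add_apply, hwdef, hvdef]
  have hwlim : Tendsto w atTop (𝓝 (0 : EReal)) := by
    rw [show (0 : EReal) = ((0:ℝ) : EReal) by simp]
    rw [hwdef]
    refine EReal.tendsto_coe.2 ?_
    simpa using (tendsto_inv_atTop_zero.comp
      tendsto_natCast_atTop_atTop).mul_const (Real.log 2)
  have hwsup : limsup w atTop = 0 := hwlim.limsup_eq
  calc liminf (fun n : ℕ =>
        ((((n : ℝ)⁻¹ : ℝ)) : EReal) * ENNReal.log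
          (⨅ z ∈ nearE M.E q n δ,
            M.P z {ω | ω (T * n) ∈ (n : ℝ) • ball q' (δ' / 2)})) atTop
      ≤ liminf (w + v) atTop := liminf_le_liminf hev
    _ ≤ limsup w atTop + liminf v atTop :=
        EReal.liminf_add_le (by rw [hwsup]; exact Or.inl (by norm_num))
          (by rw [hwsup]; exact Or.inl (by norm_num))
    _ = liminf v atTop := by rw [hwsup, zero_add]

end GreenLDP
end
end

section
/- Suppose condition (H1') holds (sample path large deviation principle with good rate functions I_{[0,T]}). Then for every T > 0, every q ∈ ℝ^d and every A > 0, there exists R > 0 such that lim_{δ→0} limsup_{n→∞} sup_{z ∈ E : |z − nq| < δn} (1/n) log ℙ_z(τ_{nR} ≤ Tn) ≤ −A, where τ_R := inf{t ≥ 0 : |Z(t)| ≥ R}. -/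
open MeasureTheory Filter Set Metric
open scoped ENNReal Topology Pointwise

noncomputable section

namespace GreenLDP

variable {d : ℕ}

/-- A cadlag path is bounded on every compact interval `[0, b]`. -/
theorem cadlag_bddOn {d : ℕ} (φ : Path d) (h : CadlagOn φ) (b : ℝ) :
    ∃ C : ℝ, ∀ s ∈ Icc (0:ℝ) b, ‖φ s‖ ≤ C := by
  have key : ∀ s : Icc (0:ℝ) b, ∃ δ : ℝ, 0 < δ ∧ ∃ C : ℝ,
      ∀ x ∈ ball (s:ℝ) δ ∩ Icc (0:ℝ) b, ‖φ x‖ ≤ C := by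
    rintro ⟨s, hs0, hsb⟩
    have h1 := (h s hs0).1
    rw [ContinuousWithinAt, Metric.tendsto_nhdsWithin_nhds] at h1
    obtain ⟨δ₁, hδ₁, H1⟩ := h1 1 one_pos
    by_cases hspos : 0 < s
    · obtain ⟨L, hL⟩ := (h s hs0).2 hspos
      rw [Metric.tendsto_nhdsWithin_nhds] at hL
      obtain ⟨δ₂, hδ₂, H2⟩ := hL 1 one_pos
      refine ⟨min δ₁ δ₂, lt_min hδ₁ hδ₂, max ‖φ s‖ ‖L‖ + 1, ?_⟩
      rintro x ⟨hx1, hx2⟩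
      rw [mem_ball] at hx1
      rcases le_or_gt s x with hxs | hxs
      · have hd := H1 hxs (lt_of_lt_of_le hx1 (min_le_left _ _))
        rw [dist_eq_norm] at hd
        have := norm_sub_norm_le (φ x) (φ s)
        have hm : ‖φ s‖ ≤ max ‖φ s‖ ‖L‖ := le_max_left _ _
        linarith
      · have hd := H2 hxs (lt_of_lt_of_le hx1 (min_le_right _ _))
        rw [dist_eq_norm] at hd
        have := norm_sub_norm_le (φ x) L
        have hm : ‖L‖ ≤ max ‖φ s‖ ‖L‖ := le_max_right _ _
        linarith
    · have hs0' : s = 0 := le_antisymm (not_lt.1 hspos) hs0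
      refine ⟨δ₁, hδ₁, ‖φ s‖ + 1, ?_⟩
      rintro x ⟨hx1, hx2⟩
      rw [mem_ball] at hx1
      have hxs : s ≤ x := by rw [hs0']; exact hx2.1
      have hd := H1 hxs hx1
      rw [dist_eq_norm] at hd
      have := norm_sub_norm_le (φ x) (φ s)
      linarith
  choose δf hδf Cf hCf using key
  have hcover : Icc (0:ℝ) b ⊆ ⋃ s : Icc (0:ℝ) b, ball (s:ℝ) (δf s) := by
    intro x hx
    exact mem_iUnion.2 ⟨⟨x, hx⟩, mem_ball_self (hδf ⟨x, hx⟩)⟩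
  obtain ⟨t, ht⟩ := isCompact_Icc.elim_finite_subcover _ (fun s => isOpen_ball) hcover
  refine ⟨∑ i ∈ t, |Cf i|, ?_⟩
  intro x hx
  obtain ⟨i, hit, hxi⟩ := mem_iUnion₂.1 (ht hx)
  calc ‖φ x‖ ≤ Cf i := hCf i x ⟨hxi, hx⟩
    _ ≤ |Cf i| := le_abs_self _
    _ ≤ ∑ j ∈ t, |Cf j| := Finset.single_le_sum (fun j _ => abs_nonneg (Cf j)) hit

/-- Under (H1') (sample path LDP with good rate functions), for
every `T > 0`, `q ∈ ℝ^d` and `A > 0` there is `R > 0` such that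
`lim_{δ→0} limsup_{n→∞} sup_{z∈E,|z−nq|<δn} (1/n) log ℙ_z(τ_{nR} ≤ Tn) ≤ −A`. -/
theorem exit_prob_bound
    {d : ℕ} (M : MarkovSetup d) (Ipath : ℝ → Path d → ℝ≥0∞)
    (hSPLD : ∀ T : ℝ, 0 < T → SPLD M.E M.P T (Ipath T)) :
    ∀ T : ℝ, 0 < T → ∀ q : Sp d, ∀ A : ℝ, 0 < A → ∃ R : ℝ, 0 < R ∧
      (⨅ δ : {δ : ℝ // 0 < δ},
        limsup (fun n : ℕ =>
          ((((n : ℝ)⁻¹ : ℝ)) : EReal) * ENNReal.log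
            (⨆ z ∈ nearE M.E q n δ.1,
              M.P z {ω | exitTime ω ((n : ℝ) * R) ≤ ENNReal.ofReal (T * n)}))
          atTop)
        ≤ -(A : EReal) := by
  intro T hT q A hA
  have hT1 : (0:ℝ) < T + 1 := by linarith
  obtain ⟨hGood, _, hUp⟩ := hSPLD (T + 1) hT1
  set J : Path d → ℝ≥0∞ := Ipath (T + 1) with hJ
  set zp : Path d := fun _ => 0 with hzp
  have hK : @IsCompact _ (skorohodTop d (T + 1))
      {φ : Path d | φ 0 ∈ ({q} : Set (Sp d)) ∧ J φ ≤ ENNReal.ofReal A} :=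
    hGood A hA.le {q} isCompact_singleton
  set U : ℕ → Set (Path d) := fun m => {ψ | skorohodDist (T + 1) zp ψ < (m:ℝ) + 1} with hU
  have hUopen : ∀ m : ℕ, @IsOpen _ (skorohodTop d (T + 1)) (U m) := fun m =>
    TopologicalSpace.isOpen_generateFrom_of_mem ⟨zp, (m:ℝ) + 1, by positivity, rfl⟩
  have hcover : {φ : Path d | φ 0 ∈ ({q} : Set (Sp d)) ∧ J φ ≤ ENNReal.ofReal A} ⊆
      ⋃ m : ℕ, U m := by
    intro φ _
    obtain ⟨m, hm⟩ := exists_nat_gt (skorohodDist (T + 1) zp φ)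
    exact mem_iUnion.2 ⟨m, lt_of_lt_of_le hm (by linarith)⟩
  obtain ⟨t, ht⟩ := @IsCompact.elim_finite_subcover (Path d) (skorohodTop d (T + 1)) _ ℕ hK U hUopen hcover
  set ρ : ℝ := ((t.sup id : ℕ) : ℝ) + 1 with hρ
  have hρpos : (0:ℝ) < ρ := by positivity
  have hKsub : {φ : Path d | φ 0 ∈ ({q} : Set (Sp d)) ∧ J φ ≤ ENNReal.ofReal A} ⊆
      {ψ | skorohodDist (T + 1) zp ψ < ρ} := by
    intro φ hφ
    obtain ⟨m, hmt, hφm⟩ := mem_iUnion₂.1 (ht hφ)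
    have hmle : (m:ℝ) ≤ ((t.sup id : ℕ) : ℝ) := by
      exact_mod_cast Finset.le_sup (f := id) hmt
    have hφm' : skorohodDist (T + 1) zp φ < (m:ℝ) + 1 := hφm
    exact lt_of_lt_of_le hφm' (by rw [hρ]; linarith)
  set F : Set (Path d) := {ψ | skorohodDist (T + 1) zp ψ < ρ}ᶜ with hF
  have hFopen : @IsOpen _ (skorohodTop d (T + 1)) {ψ | skorohodDist (T + 1) zp ψ < ρ} :=
    TopologicalSpace.isOpen_generateFrom_of_mem ⟨zp, ρ, hρpos, rfl⟩
  have hFclosed : @IsClosed _ (skorohodTop d (T + 1)) F :=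
    @IsOpen.isClosed_compl (Path d) (skorohodTop d (T + 1)) _ hFopen
  refine ⟨ρ, hρpos, ?_⟩
  have hUp' := hUp q F hFclosed
  refine le_trans ?_ (le_trans hUp' ?_)
  · apply iInf_mono
    rintro ⟨δ, hδ⟩
    set g : ℝ → EReal := fun ε =>
      (ε : EReal) * ENNReal.log
        (⨆ z' ∈ nearScaled M.E ε q δ, M.P z' {ω | scaledPath ε ω ∈ F}) with hg
    have hi : Tendsto (fun n : ℕ => ((n:ℝ))⁻¹) atTop (𝓝[>] (0:ℝ)) := by
      rw [tendsto_nhdsWithin_iff]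
      refine ⟨tendsto_inv_atTop_nhds_zero_nat, ?_⟩
      filter_upwards [eventually_ge_atTop 1] with n hn
      have hn0 : (0:ℝ) < n := by exact_mod_cast hn
      exact mem_Ioi.2 (inv_pos.2 hn0)
    have key : ∀ᶠ n : ℕ in atTop,
        ((((n : ℝ)⁻¹ : ℝ)) : EReal) * ENNReal.log
          (⨆ z ∈ nearE M.E q n δ,
            M.P z {ω | exitTime ω ((n : ℝ) * ρ) ≤ ENNReal.ofReal (T * n)})
          ≤ (g ∘ fun n : ℕ => ((n:ℝ))⁻¹) n := by
      filter_upwards [eventually_ge_atTop 1] with n hn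
      have hn0 : (0:ℝ) < n := by exact_mod_cast hn
      have hnonneg : (0:EReal) ≤ (((n:ℝ)⁻¹ : ℝ) : EReal) := by
        exact_mod_cast inv_nonneg.2 hn0.le
      refine mul_le_mul_of_nonneg_left ?_ hnonneg
      rw [ENNReal.log_le_log_iff]
      have hset : nearE M.E q n δ = nearScaled M.E ((n:ℝ))⁻¹ q δ := by
        ext z
        simp only [nearE, nearScaled, mem_setOf_eq, mem_sep_iff]
        refine and_congr_right fun _ => ?_
        have heq : ((n:ℝ))⁻¹ • z - q = ((n:ℝ))⁻¹ • (z - (n:ℝ) • q) := by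
          rw [smul_sub, smul_smul, inv_mul_cancel₀ hn0.ne', one_smul]
        rw [heq, norm_smul, Real.norm_eq_abs, abs_of_pos (inv_pos.2 hn0),
          inv_mul_lt_iff₀ hn0, mul_comm (n:ℝ) δ]
      rw [hset]
      refine iSup₂_mono fun z hz => ?_
      refine measure_mono_ae ?_
      filter_upwards [M.cadlag z hz.1] with ω hcad
      simp only [le_Prop_eq, mem_setOf_eq]
      intro hS
      have hlt : exitTime ω ((n : ℝ) * ρ) < ENNReal.ofReal ((T + 1) * n) := by
        refine lt_of_le_of_lt hS ?_
        rw [ENNReal.ofReal_lt_ofReal_iff (by positivity)]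
        nlinarith
      rw [exitTime] at hlt
      simp only [iInf_lt_iff, mem_setOf_eq, exists_prop] at hlt
      obtain ⟨s, ⟨hs0, hsR⟩, hslt⟩ := hlt
      have hsle : s ≤ (T + 1) * n := by
        by_contra hcon
        exact absurd hslt (not_lt.2 (ENNReal.ofReal_le_ofReal (not_le.1 hcon).le))
      obtain ⟨C, hC⟩ := cadlag_bddOn ω hcad ((T + 1) * n)
      intro hdist'
      have hdist : skorohodDist (T + 1) zp (scaledPath ((n:ℝ))⁻¹ ω) < ρ := hdist'
      have hbdd : BddBelow {r : ℝ | 0 ≤ r ∧ ∃ lam : ℝ → ℝ,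
          StrictMonoOn lam (Icc 0 (T + 1)) ∧ lam '' Icc 0 (T + 1) = Icc 0 (T + 1) ∧
          ∀ u ∈ Icc (0:ℝ) (T + 1), |lam u - u| ≤ r ∧
            ‖zp (lam u) - scaledPath ((n:ℝ))⁻¹ ω u‖ ≤ r} := ⟨0, fun r hr => hr.1⟩
      have hne : max 0 (((n:ℝ))⁻¹ * C) ∈ {r : ℝ | 0 ≤ r ∧ ∃ lam : ℝ → ℝ,
          StrictMonoOn lam (Icc 0 (T + 1)) ∧ lam '' Icc 0 (T + 1) = Icc 0 (T + 1) ∧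
          ∀ u ∈ Icc (0:ℝ) (T + 1), |lam u - u| ≤ r ∧
            ‖zp (lam u) - scaledPath ((n:ℝ))⁻¹ ω u‖ ≤ r} := by
        refine ⟨le_max_left _ _, id, fun a _ b _ hab => hab, image_id _, fun u hu => ?_⟩
        constructor
        · simp only [id_eq, sub_self, abs_zero]
          exact le_max_left _ _
        · have hval : ‖zp (id u) - scaledPath ((n:ℝ))⁻¹ ω u‖ = ((n:ℝ))⁻¹ * ‖ω (u * n)‖ := by
            simp only [hzp, id_eq, zero_sub, norm_neg, scaledPath, norm_smul,
              Real.norm_eq_abs, abs_of_pos (inv_pos.2 hn0), div_inv_eq_mul]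
          rw [hval]
          refine le_trans ?_ (le_max_right _ _)
          have hmem : u * n ∈ Icc (0:ℝ) ((T + 1) * n) := by
            constructor
            · exact mul_nonneg hu.1 hn0.le
            · nlinarith [hu.2]
          exact mul_le_mul_of_nonneg_left (hC _ hmem) (inv_nonneg.2 hn0.le)
      rw [skorohodDist] at hdist
      obtain ⟨r', hr'mem, hr'lt⟩ := (csInf_lt_iff hbdd ⟨_, hne⟩).1 hdist
      obtain ⟨hr'0, lam, hlam1, hlam2, hlam3⟩ := hr'mem
      have hu : s / n ∈ Icc (0:ℝ) (T + 1) := by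
        constructor
        · exact div_nonneg hs0 hn0.le
        · rw [div_le_iff₀ hn0]; linarith
      have hlast := (hlam3 (s / n) hu).2
      have hψ : ‖zp (lam (s / n)) - scaledPath ((n:ℝ))⁻¹ ω (s / n)‖ = ((n:ℝ))⁻¹ * ‖ω s‖ := by
        simp only [hzp, zero_sub, norm_neg, scaledPath, norm_smul, Real.norm_eq_abs,
          abs_of_pos (inv_pos.2 hn0), div_inv_eq_mul]
        rw [div_mul_cancel₀ _ hn0.ne']
      rw [hψ] at hlast
      have hρr : ρ ≤ r' := by
        calc ρ = ((n:ℝ))⁻¹ * ((n:ℝ) * ρ) := by field_simp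
          _ ≤ ((n:ℝ))⁻¹ * ‖ω s‖ := mul_le_mul_of_nonneg_left hsR (inv_nonneg.2 hn0.le)
          _ ≤ r' := hlast
      linarith
    calc limsup (fun n : ℕ =>
        ((((n : ℝ)⁻¹ : ℝ)) : EReal) * ENNReal.log
          (⨆ z ∈ nearE M.E q n δ,
            M.P z {ω | exitTime ω ((n : ℝ) * ρ) ≤ ENNReal.ofReal (T * n)})) atTop
        ≤ limsup (g ∘ fun n : ℕ => ((n:ℝ))⁻¹) atTop := limsup_le_limsup key
      _ = limsup g (map (fun n : ℕ => ((n:ℝ))⁻¹) atTop) := by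
          rw [Filter.limsup, Filter.limsup, Filter.map_map]
      _ ≤ limsup g (𝓝[>] (0:ℝ)) := limsup_le_limsup_of_le hi
  · have hInf : (A : EReal) ≤ ⨅ φ ∈ {φ ∈ F | φ 0 = q}, ((J φ : ℝ≥0∞) : EReal) := by
      refine le_iInf₂ fun φ hφ => ?_
      have hnotK : ¬ J φ ≤ ENNReal.ofReal A := fun hle => hφ.1 (hKsub ⟨hφ.2, hle⟩)
      have h2 : ENNReal.ofReal A ≤ J φ := (not_le.1 hnotK).le
      calc (A : EReal) = ((ENNReal.ofReal A : ℝ≥0∞) : EReal) := by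
            rw [EReal.coe_ennreal_ofReal, max_eq_left hA.le]
        _ ≤ _ := EReal.coe_ennreal_le_coe_ennreal_iff.2 h2
    exact EReal.neg_le_neg_iff.2 hInf

end GreenLDP
end
end
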